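/- arXiv:math/0511058 — 7 statements merged into one kernel-verified Lean document; each statement's English description precedes it below -/
import Mathlib

section
/- For i.i.d. positive integrable random variables ζ_1, ζ_2, ..., define σ_k := ζ_1 + ... + ζ_k and η_k := E[1/σ_k]. Then the sequence (η_k) is convex, i.e., η_k - η_{k+1} ≥ η_{k+1} - η_{k+2} for all k ≥ 1. -/
open MeasureTheory ProbabilityTheory Finset

/-- For i.i.d. positive integrable random variables `ζ 0, ζ 1, ...`, with partial sums
`σ k = ζ 0 + ⋯ + ζ (k-1)` and `η k = E[1/σ k]` (assumed finite, i.e. integrable),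
the sequence `(η k)` is convex: `η k − η (k+1) ≥ η (k+1) − η (k+2)` for all `k ≥ 1`. -/
theorem harmonic_sums_convex
    {Ω : Type*} [MeasureSpace Ω] [IsProbabilityMeasure (ℙ : Measure Ω)]
    (ζ : ℕ → Ω → ℝ)
    (hmeas : ∀ i, Measurable (ζ i))
    (hindep : iIndepFun ζ ℙ)
    (hident : ∀ i, IdentDistrib (ζ i) (ζ 0) ℙ ℙ)
    (hpos : ∀ i, ∀ᵐ ω ∂ℙ, 0 < ζ i ω)
    (hint : Integrable (ζ 0) ℙ)
    (σ : ℕ → Ω → ℝ) (hσ : ∀ k ω, σ k ω = ∑ i ∈ Finset.range k, ζ i ω)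
    (η : ℕ → ℝ) (hη : ∀ k, η k = ∫ ω, 1 / σ k ω ∂ℙ)
    (hηint : ∀ k, 1 ≤ k → Integrable (fun ω => 1 / σ k ω) ℙ) :
    ∀ k, 1 ≤ k → η k - η (k + 1) ≥ η (k + 1) - η (k + 2) := by
  intro k hk
  have hσmeas : ∀ j, Measurable (σ j) := by
    intro j
    have h : σ j = fun ω => ∑ i ∈ Finset.range j, ζ i ω := funext (hσ j)
    rw [h]
    exact Finset.measurable_sum _ (fun i _ => hmeas i)
  set F : ℝ × ℝ → ℝ := fun p => 1 / p.1 - 1 / (p.1 + p.2) with hF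
  have hFmeas : Measurable F :=
    (measurable_const.div measurable_fst).sub
      (measurable_const.div (measurable_fst.add measurable_snd))
  -- joint law of (σ k, ζ j) for j ≥ k
  have hpair : ∀ j, k ≤ j → Measure.map (fun ω => (σ k ω, ζ j ω)) ℙ
      = (Measure.map (σ k) ℙ).prod (Measure.map (ζ 0) ℙ) := by
    intro j hj
    have hind : IndepFun (σ k) (ζ j) ℙ := by
      have h := hindep.indepFun_finsetSum_of_notMem hmeas
        (s := Finset.range k) (i := j) (by simp; omega)
      have hs : (∑ i ∈ Finset.range k, ζ i) = σ k := by
        funext ω; rw [hσ k ω, Finset.sum_apply]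
      rwa [hs] at h
    rw [(indepFun_iff_map_prod_eq_prod_map_map (hσmeas k).aemeasurable
      (hmeas j).aemeasurable).mp hind, (hident j).map_eq]
  have hid : IdentDistrib (fun ω => (σ k ω, ζ k ω)) (fun ω => (σ k ω, ζ (k+1) ω)) ℙ ℙ :=
    ⟨((hσmeas k).prodMk (hmeas k)).aemeasurable,
     ((hσmeas k).prodMk (hmeas (k+1))).aemeasurable,
     by rw [hpair k le_rfl, hpair (k+1) (by omega)]⟩
  have hExch : ∫ ω, F (σ k ω, ζ k ω) ∂ℙ = ∫ ω, F (σ k ω, ζ (k+1) ω) ∂ℙ :=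
    (hid.comp hFmeas).integral_eq
  -- a.e. positivity of σ k
  have hσpos : ∀ᵐ ω ∂ℙ, 0 < σ k ω := by
    filter_upwards [ae_all_iff.2 hpos] with ω hω
    rw [hσ]
    exact Finset.sum_pos (fun i _ => hω i) (Finset.nonempty_range_iff.mpr (by omega))
  have hsucc : ∀ j ω, σ (j+1) ω = σ j ω + ζ j ω := fun j ω => by
    rw [hσ, hσ, Finset.sum_range_succ]
  -- integrability of F (σ k ·, ζ (k+1) ·)
  have hint2 : Integrable (fun ω => F (σ k ω, ζ (k+1) ω)) ℙ := by
    apply Integrable.mono' (hηint k hk)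
      (hFmeas.comp ((hσmeas k).prodMk (hmeas (k+1)))).aestronglyMeasurable
    filter_upwards [hσpos, hpos (k+1)] with ω hs hy
    have hle : 1/(σ k ω + ζ (k+1) ω) ≤ 1/(σ k ω) :=
      one_div_le_one_div_of_le hs (by linarith)
    have hnn : (0:ℝ) ≤ 1/(σ k ω + ζ (k+1) ω) := by positivity
    simp only [hF, Function.comp_apply, Real.norm_eq_abs]
    rw [abs_of_nonneg (by linarith)]
    linarith
  -- express η differences as integrals of F
  have hd1 : η k - η (k+1) = ∫ ω, F (σ k ω, ζ k ω) ∂ℙ := by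
    rw [hη, hη, ← integral_sub (hηint k hk) (hηint (k+1) (by omega))]
    apply integral_congr_ae
    filter_upwards with ω
    simp only [hF, hsucc k ω]
  have hd2 : η (k+1) - η (k+2) = ∫ ω, F (σ (k+1) ω, ζ (k+1) ω) ∂ℙ := by
    rw [hη, hη, ← integral_sub (hηint (k+1) (by omega)) (hηint (k+2) (by omega))]
    apply integral_congr_ae
    filter_upwards with ω
    simp only [hF, hsucc (k+1) ω]
  -- pointwise comparison
  have hmono : ∫ ω, F (σ (k+1) ω, ζ (k+1) ω) ∂ℙ ≤ ∫ ω, F (σ k ω, ζ (k+1) ω) ∂ℙ := by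
    apply integral_mono_ae ?_ hint2 ?_
    case _ =>
      -- integrability of F (σ (k+1) ·, ζ (k+1) ·)
      have h : (fun ω => F (σ (k+1) ω, ζ (k+1) ω))
          = fun ω => 1 / σ (k+1) ω - 1 / σ (k+2) ω := by
        funext ω
        simp only [hF, hsucc (k+1) ω]
      rw [h]
      exact (hηint (k+1) (by omega)).sub (hηint (k+2) (by omega))
    case _ =>
      filter_upwards [hσpos, hpos k, hpos (k+1)] with ω hs hx hy
      have hσ1 : σ (k+1) ω = σ k ω + ζ k ω := hsucc k ω
      set s := σ k ω
      set x := ζ k ω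
      set y := ζ (k+1) ω
      simp only [hF, hσ1]
      have h1 : 1/(s+x) - 1/(s+x+y) = y/((s+x)*(s+x+y)) := by
        field_simp
        ring
      have h2 : 1/s - 1/(s+y) = y/(s*(s+y)) := by
        field_simp
        ring
      rw [h1, h2]
      exact div_le_div_of_nonneg_left (le_of_lt hy) (by positivity) (by nlinarith)
  rw [ge_iff_le, hd1, hd2, hExch]
  exact hmono
end

section
/- Let L be a nonnegative integer-valued square integrable random variable, not identically zero, and let m_2 := E[L^2]/E[L]. Define φ_c(s) := c(1 − E[s^L]) − E[L](1 − s^c) for c > 0 and s ∈ [0,1]. Then φ_c(s) ≥ 0 for all s ∈ [0,1] if and only if c ≥ m_2. -/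
open MeasureTheory ProbabilityTheory Real Filter Finset Set

lemma key_real {c x : ℝ} (hc : 0 < c) (hx : 0 ≤ x) {a : ℝ} (ha : 0 ≤ a) :
    x * (c - x) / c * (1 - Real.exp (-(a * c)) * (1 + a * c)) ≤
      c * (1 - Real.exp (-(a * x))) - x * (1 - Real.exp (-(a * c))) := by
  set f : ℝ → ℝ := fun t =>
    c * (1 - Real.exp (-(t * x))) - x * (1 - Real.exp (-(t * c)))
      - x * (c - x) / c * (1 - Real.exp (-(t * c)) * (1 + t * c)) with hf
  have hderiv : ∀ t : ℝ, HasDerivAt f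
      (c * x * Real.exp (-(t * c)) * (Real.exp (t * (c - x)) - 1 - t * (c - x))) t := by
    intro t
    have h1 : HasDerivAt (fun t : ℝ => -(t * x)) (-x) t := by
      exact (hasDerivAt_mul_const x (x := t)).neg
    have h1c : HasDerivAt (fun t : ℝ => -(t * c)) (-c) t := by
      exact (hasDerivAt_mul_const c (x := t)).neg
    have h2 := h1.exp
    have h3 := h1c.exp
    have h4 : HasDerivAt (fun t : ℝ => 1 + t * c) c t := by
      simpa using (hasDerivAt_mul_const c (x := t)).const_add 1
    have h5 := h3.mul h4
    have hA := (h2.const_sub 1).const_mul c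
    have hB := (h3.const_sub 1).const_mul x
    have hC := (h5.const_sub 1).const_mul (x * (c - x) / c)
    have := (hA.sub hB).sub hC
    refine this.congr_deriv ?_
    have hE : Real.exp (-(t * c)) * Real.exp (t * (c - x)) = Real.exp (-(t * x)) := by
      rw [← Real.exp_add]; ring_nf
    have hc' : c ≠ 0 := hc.ne'
    rw [← hE]
    field_simp
    ring
  have hmono : Monotone f := by
    apply monotone_of_deriv_nonneg
    · exact fun t => (hderiv t).differentiableAt
    · intro t
      rw [(hderiv t).deriv]
      have h := Real.add_one_le_exp (t * (c - x))
      have : (0:ℝ) ≤ Real.exp (t * (c - x)) - 1 - t * (c - x) := by linarith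
      positivity
  have h0 : f 0 = 0 := by simp [hf]
  have hfa : f 0 ≤ f a := hmono ha
  rw [h0] at hfa
  simp only [hf] at hfa
  linarith

lemma geom_aux (s : ℝ) (n : ℕ) : (1 - s) * ∑ j ∈ range n, s ^ j = 1 - s ^ n := by
  have := geom_sum_mul s n
  linarith [this]

lemma sq_sum_ident (s : ℝ) (n : ℕ) :
    (1 - s) ^ 2 * (∑ k ∈ range n, ∑ j ∈ range k, s ^ j) = n * (1 - s) - (1 - s ^ n) := by
  induction n with
  | zero => simp
  | succ n ih =>
      rw [Finset.sum_range_succ, mul_add]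
      have h := geom_aux s n
      push_cast
      linear_combination ih + (1 - s) * h

lemma sum_cast_ident (n : ℕ) : (∑ k ∈ range n, (k : ℝ)) = ((n : ℝ) ^ 2 - n) / 2 := by
  induction n with
  | zero => simp
  | succ n ih => rw [Finset.sum_range_succ, ih]; push_cast; ring

lemma sum_sum_bound {s : ℝ} (hs0 : 0 ≤ s) (hs1 : s ≤ 1) (n : ℕ) :
    |∑ k ∈ range n, ∑ j ∈ range k, s ^ j| ≤ (n : ℝ) ^ 2 := by
  have h1 : (∑ k ∈ range n, ∑ j ∈ range k, s ^ j) ≤ ∑ k ∈ range n, (k : ℝ) := by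
    apply Finset.sum_le_sum
    intro k _
    calc (∑ j ∈ range k, s ^ j) ≤ ∑ j ∈ range k, (1:ℝ) :=
          Finset.sum_le_sum fun j _ => pow_le_one₀ hs0 hs1
      _ = k := by simp
  have h2 : (0:ℝ) ≤ ∑ k ∈ range n, ∑ j ∈ range k, s ^ j :=
    Finset.sum_nonneg fun k _ => Finset.sum_nonneg fun j _ => pow_nonneg hs0 j
  have h3 : (∑ k ∈ range n, (k : ℝ)) ≤ (n:ℝ)^2 := by
    calc (∑ k ∈ range n, (k : ℝ)) ≤ ∑ k ∈ range n, (n : ℝ) :=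
          Finset.sum_le_sum fun k hk => by exact_mod_cast (Finset.mem_range.mp hk).le
      _ = n * n := by simp [mul_comm]
      _ = (n:ℝ)^2 := by ring
  rw [abs_of_nonneg h2]; linarith

/-- Let `L` be a nonnegative integer-valued square-integrable random variable, not identically
zero, and `m₂ := E[L²]/E[L]`.  With `φ_c(s) := c(1 − E[s^L]) − E[L](1 − s^c)` for `c > 0`
(`s^c` is the real power `Real.rpow`, with `0^c = 0`), one has
`φ_c(s) ≥ 0` for all `s ∈ [0,1]` if and only if `c ≥ m₂`. -/
theorem phi_nonneg_iff_ge_m2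
    {Ω : Type*} [MeasureSpace Ω] [IsProbabilityMeasure (ℙ : Measure Ω)]
    (L : Ω → ℕ) (hL : Measurable L)
    (hsq : Integrable (fun ω => ((L ω : ℝ)) ^ 2) ℙ)
    (hpos : 0 < ∫ ω, (L ω : ℝ) ∂ℙ)
    (c : ℝ) (hc : 0 < c) :
    (∀ s ∈ Set.Icc (0 : ℝ) 1,
        0 ≤ c * (1 - ∫ ω, s ^ (L ω) ∂ℙ) - (∫ ω, (L ω : ℝ) ∂ℙ) * (1 - s ^ c)) ↔
      (∫ ω, (L ω : ℝ) ^ 2 ∂ℙ) / (∫ ω, (L ω : ℝ) ∂ℙ) ≤ c := by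
  have hLmeas : AEStronglyMeasurable (fun ω => (L ω : ℝ)) ℙ :=
    ((Measurable.of_discrete (f := fun n : ℕ => (n : ℝ))).comp hL).aestronglyMeasurable
  have hintL : Integrable (fun ω => (L ω : ℝ)) ℙ := by
    refine ((integrable_const (1:ℝ)).add hsq).mono' hLmeas ?_
    filter_upwards with ω
    have h0 : (0:ℝ) ≤ (L ω : ℝ) := Nat.cast_nonneg _
    simp only [Pi.add_apply]
    rw [Real.norm_eq_abs, abs_of_nonneg h0]
    nlinarith [sq_nonneg ((L ω : ℝ) - 1)]
  have hintpow : ∀ s : ℝ, 0 ≤ s → s ≤ 1 → Integrable (fun ω => s ^ (L ω)) ℙ := by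
    intro s h0 h1
    refine (integrable_const (1:ℝ)).mono'
      (((Measurable.of_discrete (f := fun n : ℕ => s ^ n)).comp hL).aestronglyMeasurable) ?_
    filter_upwards with ω
    rw [Real.norm_eq_abs, abs_of_nonneg (pow_nonneg h0 _)]
    exact pow_le_one₀ h0 h1
  set I1 : ℝ := ∫ ω, (L ω : ℝ) ∂ℙ with hI1
  set I2 : ℝ := ∫ ω, (L ω : ℝ) ^ 2 ∂ℙ with hI2
  constructor
  · -- necessity
    intro h
    rw [div_le_iff₀ hpos]
    -- S s ω := ∑_{k < L ω} ∑_{j < k} s^j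
    have hSmeas : ∀ s : ℝ, AEStronglyMeasurable
        (fun ω => ∑ k ∈ range (L ω), ∑ j ∈ range k, s ^ j) ℙ := fun s =>
      ((Measurable.of_discrete (f := fun n : ℕ => ∑ k ∈ range n, ∑ j ∈ range k, s ^ j)).comp
        hL).aestronglyMeasurable
    have hSint : ∀ s : ℝ, 0 ≤ s → s ≤ 1 →
        Integrable (fun ω => ∑ k ∈ range (L ω), ∑ j ∈ range k, s ^ j) ℙ := by
      intro s h0 h1
      refine hsq.mono' (hSmeas s) ?_
      filter_upwards with ω
      rw [Real.norm_eq_abs]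
      exact sum_sum_bound h0 h1 (L ω)
    have hev : ∀ᶠ s in nhdsWithin (1:ℝ) (Set.Iio 1),
        c * (∫ ω, ∑ k ∈ range (L ω), ∑ j ∈ range k, s ^ j ∂ℙ) ≤
          I1 * ((c * (1 - s) - (1 - s ^ c)) / (1 - s) ^ 2) := by
      filter_upwards [Ioo_mem_nhdsLT_of_mem
        (show (1:ℝ) ∈ Set.Ioc 0 1 from ⟨zero_lt_one, le_refl 1⟩)] with s hs
      obtain ⟨h0, h1⟩ := hs
      have hφ := h s ⟨h0.le, h1.le⟩
      have hid : (1 - s) ^ 2 * (∫ ω, ∑ k ∈ range (L ω), ∑ j ∈ range k, s ^ j ∂ℙ)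
          = I1 * (1 - s) - (1 - ∫ ω, s ^ (L ω) ∂ℙ) := by
        rw [← integral_const_mul]
        have : ∀ ω, (1 - s) ^ 2 * (∑ k ∈ range (L ω), ∑ j ∈ range k, s ^ j)
            = (L ω : ℝ) * (1 - s) - (1 - s ^ (L ω)) := fun ω => sq_sum_ident s (L ω)
        have ha1 : Integrable (fun ω => (L ω : ℝ) * (1 - s)) ℙ := hintL.mul_const _
        have ha2 : Integrable (fun ω => 1 - s ^ (L ω)) ℙ :=
          (integrable_const 1).sub (hintpow s h0.le h1.le)
        rw [integral_congr_ae (Filter.Eventually.of_forall this),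
          integral_sub ha1 ha2, integral_mul_const,
          integral_sub (integrable_const 1) (hintpow s h0.le h1.le)]
        simp [hI1]
      have hsq2 : (0:ℝ) < (1 - s) ^ 2 := pow_pos (by linarith) 2
      rw [mul_div_assoc', le_div_iff₀ hsq2]
      nlinarith [hφ, hid, hc.le, mul_le_mul_of_nonneg_left (by linarith [hφ] :
        I1 * (1 - s ^ c) ≤ c * (1 - ∫ ω, s ^ (L ω) ∂ℙ)) hc.le]
    have hβ : Tendsto (fun s : ℝ => (c * (1 - s) - (1 - s ^ c)) / (1 - s) ^ 2)
        (nhdsWithin (1:ℝ) (Set.Iio 1)) (nhds (c * (c - 1) / 2)) := by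
      have hslope : Tendsto (fun s : ℝ => (c * s ^ (c - 1) - c) / (2 * s - 2))
          (nhdsWithin (1:ℝ) (Set.Iio 1)) (nhds (c * (c - 1) / 2)) := by
        have hder : HasDerivAt (fun t : ℝ => t ^ (c - 1)) ((c - 1) * (1:ℝ) ^ (c - 1 - 1)) 1 :=
          Real.hasDerivAt_rpow_const (Or.inl one_ne_zero)
        rw [Real.one_rpow, mul_one] at hder
        have hsl := hasDerivAt_iff_tendsto_slope.mp hder
        have h2 : Tendsto (slope (fun t : ℝ => t ^ (c - 1)) 1)
            (nhdsWithin (1:ℝ) (Set.Iio 1)) (nhds (c - 1)) :=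
          hsl.mono_left (nhdsWithin_mono _ (fun x hx => ne_of_lt hx))
        have h3 := h2.const_mul (c / 2)
        have hval : c / 2 * (c - 1) = c * (c - 1) / 2 := by ring
        rw [hval] at h3
        refine h3.congr' ?_
        filter_upwards [self_mem_nhdsWithin] with s hs
        have hs1 : s - 1 ≠ 0 := sub_ne_zero.mpr (ne_of_lt hs)
        have h2s : (2:ℝ) * s - 2 ≠ 0 := fun hh => hs1 (by linarith)
        rw [slope_def_field, Real.one_rpow]
        field_simp [hs1, h2s]
      apply HasDerivAt.lhopital_zero_nhdsLT
        (f' := fun s : ℝ => c * s ^ (c - 1) - c) (g' := fun s : ℝ => 2 * s - 2)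
      · filter_upwards [Ioo_mem_nhdsLT_of_mem
          (show (1:ℝ) ∈ Set.Ioc 0 1 from ⟨zero_lt_one, le_refl 1⟩)] with s hs
        have hr : HasDerivAt (fun t : ℝ => t ^ c) (c * s ^ (c - 1)) s :=
          Real.hasDerivAt_rpow_const (Or.inl hs.1.ne')
        have hlin : HasDerivAt (fun t : ℝ => c * (1 - t)) (-c) s := by
          simpa using ((hasDerivAt_id s).const_sub 1).const_mul c
        have := hlin.sub ((hr.const_sub 1))
        refine this.congr_deriv ?_
        ring
      · apply Filter.Eventually.of_forall
        intro s
        have hlin : HasDerivAt (fun t : ℝ => 1 - t) (-1) s := (hasDerivAt_id s).const_sub 1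
        have := hlin.pow 2
        refine this.congr_deriv ?_
        ring
      · filter_upwards [self_mem_nhdsWithin] with s hs
        have : s < 1 := hs
        intro hcontra
        nlinarith [hcontra]
      · have hcontf : ContinuousAt (fun s : ℝ => c * (1 - s) - (1 - s ^ c)) 1 := by
          have h1 : ContinuousAt (fun s : ℝ => s ^ c) 1 :=
            Real.continuousAt_rpow_const 1 c (Or.inl one_ne_zero)
          fun_prop
        have ht : Tendsto (fun s : ℝ => c * (1 - s) - (1 - s ^ c))
            (nhdsWithin (1:ℝ) (Set.Iio 1)) (nhds (c * (1 - 1) - (1 - (1:ℝ) ^ c))) :=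
          hcontf.tendsto.mono_left nhdsWithin_le_nhds
        simpa using ht
      · have hcontg : ContinuousAt (fun s : ℝ => (1 - s) ^ 2) 1 := by fun_prop
        have ht : Tendsto (fun s : ℝ => (1 - s) ^ 2)
            (nhdsWithin (1:ℝ) (Set.Iio 1)) (nhds ((1 - (1:ℝ)) ^ 2)) :=
          hcontg.tendsto.mono_left nhdsWithin_le_nhds
        simpa using ht
      · exact hslope
    have hS : Tendsto (fun s : ℝ => ∫ ω, (∑ k ∈ range (L ω), ∑ j ∈ range k, s ^ j) ∂ℙ)
        (nhdsWithin (1:ℝ) (Set.Iio 1)) (nhds (∫ ω, (∑ k ∈ range (L ω), (k : ℝ)) ∂ℙ)) := by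
      apply tendsto_integral_filter_of_dominated_convergence (bound := fun ω => (L ω : ℝ) ^ 2)
      · exact Filter.Eventually.of_forall fun s => hSmeas s
      · filter_upwards [Ioo_mem_nhdsLT_of_mem
          (show (1:ℝ) ∈ Set.Ioc 0 1 from ⟨zero_lt_one, le_refl 1⟩)] with s hs
        exact Filter.Eventually.of_forall fun ω => by
          rw [Real.norm_eq_abs]; exact sum_sum_bound hs.1.le hs.2.le (L ω)
      · exact hsq
      · apply Filter.Eventually.of_forall
        intro ω
        have hcont : Continuous (fun s : ℝ => ∑ k ∈ range (L ω), ∑ j ∈ range k, s ^ j) :=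
          continuous_finset_sum _ fun k _ => continuous_finset_sum _ fun j _ => continuous_pow j
        have ht : Tendsto (fun s : ℝ => ∑ k ∈ range (L ω), ∑ j ∈ range k, s ^ j)
            (nhdsWithin (1:ℝ) (Set.Iio 1))
            (nhds (∑ k ∈ range (L ω), ∑ j ∈ range k, (1:ℝ) ^ j)) :=
          (hcont.tendsto 1).mono_left nhdsWithin_le_nhds
        simpa using ht
    have hfval : (∫ ω, (∑ k ∈ range (L ω), (k : ℝ)) ∂ℙ) = (I2 - I1) / 2 := by
      have : (fun ω => ∑ k ∈ range (L ω), (k : ℝ))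
          = fun ω => ((L ω : ℝ) ^ 2 - (L ω : ℝ)) / 2 := funext fun ω => sum_cast_ident (L ω)
      rw [this, integral_div, integral_sub hsq hintL]
    rw [hfval] at hS
    have hle := le_of_tendsto_of_tendsto (hS.const_mul c) (hβ.const_mul I1) hev
    -- hle : c * ((I2 - I1)/2) ≤ I1 * (c * (c - 1) / 2)
    have hmul : c * I2 ≤ c * (c * I1) := by nlinarith [hle]
    exact (mul_le_mul_iff_right₀ hc).mp hmul
  · -- sufficiency
    intro hm s hs
    obtain ⟨hs0, hs1⟩ := hs
    have hI : I2 ≤ c * I1 := by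
      rw [div_le_iff₀ hpos] at hm; linarith [hm]
    obtain ⟨K, hK0, hKpt⟩ : ∃ K : ℝ, 0 ≤ K ∧ ∀ n : ℕ,
        (n : ℝ) * (c - n) / c * K ≤ c * (1 - s ^ n) - n * (1 - s ^ c) := by
      rcases eq_or_lt_of_le hs0 with h | h
      · refine ⟨1, zero_le_one, fun n => ?_⟩
        rw [← h, Real.zero_rpow hc.ne']
        cases n with
        | zero => simp
        | succ m =>
            have hz : (0:ℝ) ^ (m + 1) = 0 := by simp
            rw [hz]
            rw [mul_one, div_le_iff₀ hc]
            push_cast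
            nlinarith [sq_nonneg (c - ((m:ℝ) + 1))]
      · set a := -Real.log s with hadef
        have ha : 0 ≤ a := neg_nonneg.mpr (Real.log_nonpos hs0 hs1)
        have hsc : s ^ c = Real.exp (-(a * c)) := by
          rw [Real.rpow_def_of_pos h]; congr 1; rw [hadef]; ring
        have hsn : ∀ n : ℕ, s ^ n = Real.exp (-(a * n)) := by
          intro n
          rw [← Real.exp_log h, ← Real.exp_nat_mul]
          congr 1; rw [hadef]; ring
        refine ⟨1 - Real.exp (-(a * c)) * (1 + a * c), ?_, fun n => ?_⟩
        · have h1 := Real.add_one_le_exp (a * c)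
          have hmul : Real.exp (-(a * c)) * Real.exp (a * c) = 1 := by
            rw [← Real.exp_add]; simp
          nlinarith [Real.exp_pos (-(a * c))]
        · rw [hsc, hsn n]
          exact key_real hc (Nat.cast_nonneg n) ha
    have hps := hintpow s hs0 hs1
    have int1 : Integrable (fun ω => ((L ω : ℝ) * c - (L ω : ℝ) ^ 2) * (K / c)) ℙ :=
      ((hintL.mul_const c).sub hsq).mul_const _
    have int2 : Integrable (fun ω => c * (1 - s ^ (L ω)) - (L ω : ℝ) * (1 - s ^ c)) ℙ :=
      (((integrable_const (1:ℝ)).sub hps).const_mul c).sub (hintL.mul_const _)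
    have hKpt' : ∀ ω, ((L ω : ℝ) * c - (L ω : ℝ) ^ 2) * (K / c)
        ≤ c * (1 - s ^ (L ω)) - (L ω : ℝ) * (1 - s ^ c) := by
      intro ω
      have hp := hKpt (L ω)
      have heq : ((L ω : ℝ) * c - (L ω : ℝ) ^ 2) * (K / c)
          = (L ω : ℝ) * (c - (L ω : ℝ)) / c * K := by ring
      rw [heq]; exact hp
    have hmono := integral_mono int1 int2 hKpt'
    have e1 : ∫ ω, ((L ω : ℝ) * c - (L ω : ℝ) ^ 2) * (K / c) ∂ℙ = (I1 * c - I2) * (K / c) := by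
      rw [integral_mul_const, integral_sub (hintL.mul_const c) hsq, integral_mul_const]
    have e2 : ∫ ω, (c * (1 - s ^ (L ω)) - (L ω : ℝ) * (1 - s ^ c)) ∂ℙ
        = c * (1 - ∫ ω, s ^ (L ω) ∂ℙ) - I1 * (1 - s ^ c) := by
      have hb1 : Integrable (fun ω => c * (1 - s ^ (L ω))) ℙ :=
        ((integrable_const (1:ℝ)).sub hps).const_mul c
      have hb2 : Integrable (fun ω => (L ω : ℝ) * (1 - s ^ c)) ℙ := hintL.mul_const _
      rw [integral_sub hb1 hb2, integral_const_mul, integral_mul_const,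
        integral_sub (integrable_const 1) hps, integral_const]
      simp [hI1]
    rw [e1, e2] at hmono
    have hnn : 0 ≤ (I1 * c - I2) * (K / c) :=
      mul_nonneg (by linarith) (div_nonneg hK0 hc.le)
    linarith
end

section
/- Let L be a nonnegative integer-valued square integrable random variable with E[L] > 0. Define ψ_c(s) := c(1 − E[s^{L/c}]) − E[L](1 − s) for s ∈ [0,1] and c > 0. If c ≥ E[L^2]/E[L], then ψ_c is convex on (0,1). -/
open MeasureTheory ProbabilityTheory Real

lemma key_convex (c p : ℝ) (hc : 0 < c) (hp : 0 ≤ p) :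
    ConvexOn ℝ (Set.Ioo (0:ℝ) 1)
      (fun s => -(c * s ^ p) - (c * p * (1 - p)) * (s * Real.log s - s)) := by
  set k := c * p * (1 - p) with hk
  have hint : interior (Set.Ioo (0:ℝ) 1) = Set.Ioo 0 1 := interior_Ioo
  apply convexOn_of_hasDerivWithinAt2_nonneg (f' := fun s => -(c * p * s ^ (p-1)) - k * Real.log s)
    (f'' := fun s => k * s ^ (p-2) - k * s⁻¹) (convex_Ioo 0 1)
  · -- continuity
    apply ContinuousOn.sub
    · exact (continuousOn_const.mul (continuousOn_id.rpow_const
        (fun x hx => Or.inl hx.1.ne'))).neg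
    · exact continuousOn_const.mul ((continuousOn_id.mul
        (Real.continuousOn_log.mono (fun x hx => hx.1.ne'))).sub continuousOn_id)
  · rw [hint]
    intro x hx
    have h1 : HasDerivAt (fun s : ℝ => -(c * s ^ p)) (-(c * p * x ^ (p-1))) x := by
      have := (Real.hasDerivAt_rpow_const (x := x) (p := p) (Or.inl hx.1.ne')).const_mul c
      exact this.neg.congr_deriv (by ring)
    have h2 : HasDerivAt (fun s : ℝ => k * (s * Real.log s - s)) (k * Real.log x) x := by
      have hlog := Real.hasDerivAt_log hx.1.ne'
      have hml : HasDerivAt (fun s : ℝ => s * Real.log s) (Real.log x + 1) x := by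
        have := (hasDerivAt_id x).mul hlog
        exact this.congr_deriv (by simp only [id, one_mul, mul_inv_cancel₀ hx.1.ne'])
      have := ((hml.sub (hasDerivAt_id x)).const_mul k)
      exact this.congr_deriv (by ring)
    exact ((h1.sub h2)).hasDerivWithinAt
  · rw [hint]
    intro x hx
    have h1 : HasDerivAt (fun s : ℝ => -(c * p * s ^ (p-1))) (k * x ^ (p-2)) x := by
      have := (Real.hasDerivAt_rpow_const (x := x) (p := p - 1) (Or.inl hx.1.ne')).const_mul (c*p)
      have h2 := this.neg
      exact h2.congr_deriv (by rw [hk]; ring_nf)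
    have h2 : HasDerivAt (fun s : ℝ => k * Real.log s) (k * x⁻¹) x :=
      (Real.hasDerivAt_log hx.1.ne').const_mul k
    exact (h1.sub h2).hasDerivWithinAt
  · rw [hint]
    intro x hx
    rw [show (x⁻¹ : ℝ) = x ^ (-1 : ℝ) by rw [Real.rpow_neg_one]]
    rcases le_total p 1 with h | h
    · have hknn : 0 ≤ k := by
        apply mul_nonneg (mul_nonneg hc.le hp); linarith
      have : x ^ (-1:ℝ) ≤ x ^ (p-2) :=
        Real.rpow_le_rpow_of_exponent_ge hx.1 hx.2.le (by linarith)
      nlinarith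
    · have hknp : k ≤ 0 := by
        apply mul_nonpos_of_nonneg_of_nonpos (mul_nonneg hc.le hp); linarith
      have : x ^ (p-2) ≤ x ^ (-1:ℝ) :=
        Real.rpow_le_rpow_of_exponent_ge hx.1 hx.2.le (by linarith)
      nlinarith

lemma u_convex : ConvexOn ℝ (Set.Ioo (0:ℝ) 1) (fun s => s * Real.log s - s) := by
  have h1 : ConvexOn ℝ (Set.Ici (0:ℝ)) (fun s : ℝ => s * Real.log s - s) :=
    Real.convexOn_mul_log.sub (concaveOn_id (convex_Ici 0))
  exact h1.subset (fun t ht => le_of_lt ht.1) (convex_Ioo 0 1)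

/-- Let `L` be a nonnegative integer-valued square-integrable random variable with `E[L] > 0`,
and for `c > 0` let `ψ_c(s) := c(1 − E[s^{L/c}]) − E[L](1 − s)` (real powers are `Real.rpow`).
If `c ≥ E[L²]/E[L]`, then `ψ_c` is convex on `(0,1)`. -/
theorem psi_convex
    {Ω : Type*} [MeasureSpace Ω] [IsProbabilityMeasure (ℙ : Measure Ω)]
    (L : Ω → ℕ) (hL : Measurable L)
    (hsq : Integrable (fun ω => ((L ω : ℝ)) ^ 2) ℙ)
    (hpos : 0 < ∫ ω, (L ω : ℝ) ∂ℙ)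
    (c : ℝ) (hc : 0 < c)
    (hcm : (∫ ω, (L ω : ℝ) ^ 2 ∂ℙ) / (∫ ω, (L ω : ℝ) ∂ℙ) ≤ c) :
    ConvexOn ℝ (Set.Ioo (0 : ℝ) 1)
      (fun s => c * (1 - ∫ ω, s ^ ((L ω : ℝ) / c) ∂ℙ) -
        (∫ ω, (L ω : ℝ) ∂ℙ) * (1 - s)) := by
  have mL : Measurable (fun ω => (L ω : ℝ)) := (measurable_of_countable _).comp hL
  have intL : Integrable (fun ω => (L ω : ℝ)) ℙ := by
    refine (hsq.add (integrable_const 1)).mono' mL.aestronglyMeasurable ?_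
    filter_upwards with ω
    have h0 : (0:ℝ) ≤ (L ω : ℝ) := Nat.cast_nonneg _
    simp only [Pi.add_apply, Real.norm_eq_abs, abs_of_nonneg h0]
    nlinarith [sq_nonneg ((L ω : ℝ) - 1)]
  have intpow : ∀ s ∈ Set.Ioo (0:ℝ) 1,
      Integrable (fun ω => s ^ ((L ω : ℝ) / c)) ℙ := by
    intro s hs
    have heq : (fun ω => s ^ ((L ω : ℝ) / c)) =
        fun ω => Real.exp (Real.log s * ((L ω : ℝ) / c)) := by
      funext ω; exact Real.rpow_def_of_pos hs.1 _
    refine (integrable_const 1).mono'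
      (by rw [heq]
          exact (Real.measurable_exp.comp ((mL.div_const c).const_mul
            (Real.log s))).aestronglyMeasurable) ?_
    filter_upwards with ω
    rw [Real.norm_eq_abs, abs_of_nonneg (Real.rpow_nonneg hs.1.le _)]
    exact Real.rpow_le_one hs.1.le hs.2.le (div_nonneg (Nat.cast_nonneg _) hc.le)
  have intG : ∀ s ∈ Set.Ioo (0:ℝ) 1,
      Integrable (fun ω => c * (1 - s ^ ((L ω : ℝ) / c)) - (L ω : ℝ) * (1 - s)) ℙ := by
    intro s hs
    have h1 : Integrable (fun ω => (1:ℝ) - s ^ ((L ω : ℝ) / c)) ℙ :=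
      (integrable_const 1).sub (intpow s hs)
    exact (h1.const_mul c).sub (intL.mul_const _)
  have hrw : ∀ s ∈ Set.Ioo (0:ℝ) 1,
      c * (1 - ∫ ω, s ^ ((L ω : ℝ) / c) ∂ℙ) - (∫ ω, (L ω : ℝ) ∂ℙ) * (1 - s)
        = ∫ ω, (c * (1 - s ^ ((L ω : ℝ) / c)) - (L ω : ℝ) * (1 - s)) ∂ℙ := by
    intro s hs
    have h1 : Integrable (fun ω => (1:ℝ) - s ^ ((L ω : ℝ) / c)) ℙ :=
      (integrable_const 1).sub (intpow s hs)
    rw [integral_sub (h1.const_mul c) (intL.mul_const _), integral_const_mul,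
      integral_sub (integrable_const 1) (intpow s hs), integral_const,
      integral_mul_const]
    simp
  refine ⟨convex_Ioo 0 1, fun x hx y hy a b ha hb hab => ?_⟩
  have hz : a • x + b • y ∈ Set.Ioo (0:ℝ) 1 := (convex_Ioo 0 1) hx hy ha hb hab
  simp only [smul_eq_mul] at hz ⊢
  set z := a * x + b * y with hzdef
  set D : ℝ := (z * Real.log z - z) -
      (a * (x * Real.log x - x) + b * (y * Real.log y - y)) with hD
  have hDle : D ≤ 0 := by
    have := u_convex.2 hx hy ha hb hab
    simp only [smul_eq_mul, ← hzdef] at this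
    rw [hD]
    linarith
  -- pointwise inequality
  have hpt : ∀ ω, c * (1 - z ^ ((L ω : ℝ) / c)) - (L ω : ℝ) * (1 - z)
      ≤ a * (c * (1 - x ^ ((L ω : ℝ) / c)) - (L ω : ℝ) * (1 - x))
        + b * (c * (1 - y ^ ((L ω : ℝ) / c)) - (L ω : ℝ) * (1 - y))
        + ((L ω : ℝ) - (L ω : ℝ) ^ 2 / c) * D := by
    intro ω
    set p : ℝ := (L ω : ℝ) / c with hp
    have hp0 : 0 ≤ p := div_nonneg (Nat.cast_nonneg _) hc.le
    have hconv := (key_convex c p hc hp0).2 hx hy ha hb hab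
    simp only [smul_eq_mul, ← hzdef] at hconv
    have hkk : c * p * (1 - p) = (L ω : ℝ) - (L ω : ℝ) ^ 2 / c := by
      rw [hp]; field_simp
    have step : -(c * z ^ p) + a * (c * x ^ p) + b * (c * y ^ p)
        ≤ (c * p * (1 - p)) * D := by
      rw [hD]
      nlinarith [hconv]
    rw [hkk] at step
    have hzz : (L ω : ℝ) * z = (L ω : ℝ) * (a * x + b * y) := by rw [hzdef]
    have hca : c * a + c * b = c := by rw [← mul_add, hab, mul_one]
    have hLa : (L ω : ℝ) * a + (L ω : ℝ) * b = (L ω : ℝ) := by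
      rw [← mul_add, hab, mul_one]
    nlinarith [step, hzz, hca, hLa]
  have intRHS : Integrable (fun ω =>
      a * (c * (1 - x ^ ((L ω : ℝ) / c)) - (L ω : ℝ) * (1 - x))
        + b * (c * (1 - y ^ ((L ω : ℝ) / c)) - (L ω : ℝ) * (1 - y))
        + ((L ω : ℝ) - (L ω : ℝ) ^ 2 / c) * D) ℙ := by
    have hkint : Integrable (fun ω => (L ω : ℝ) - (L ω : ℝ) ^ 2 / c) ℙ :=
      intL.sub (hsq.div_const c)
    exact (((intG x hx).const_mul a).add ((intG y hy).const_mul b)).add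
      (hkint.mul_const D)
  have hkint : Integrable (fun ω => (L ω : ℝ) - (L ω : ℝ) ^ 2 / c) ℙ :=
    intL.sub (hsq.div_const c)
  have haux : Integrable (fun ω =>
      a * (c * (1 - x ^ ((L ω : ℝ) / c)) - (L ω : ℝ) * (1 - x))
        + b * (c * (1 - y ^ ((L ω : ℝ) / c)) - (L ω : ℝ) * (1 - y))) ℙ :=
    ((intG x hx).const_mul a).add ((intG y hy).const_mul b)
  have hmono := integral_mono (intG z hz) intRHS hpt
  rw [integral_add haux (hkint.mul_const D),
    integral_add ((intG x hx).const_mul a) ((intG y hy).const_mul b),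
    integral_const_mul, integral_const_mul, integral_mul_const,
    integral_sub intL (hsq.div_const c), integral_div] at hmono
  have hknn : 0 ≤ (∫ ω, (L ω : ℝ) ∂ℙ) - (∫ ω, (L ω : ℝ) ^ 2 ∂ℙ) / c := by
    rw [div_le_iff₀ hpos] at hcm
    rw [sub_nonneg, div_le_iff₀ hc]
    linarith
  have hlast : ((∫ ω, (L ω : ℝ) ∂ℙ) - (∫ ω, (L ω : ℝ) ^ 2 ∂ℙ) / c) * D ≤ 0 :=
    mul_nonpos_of_nonneg_of_nonpos hknn hDle
  rw [hrw z hz, hrw x hx, hrw y hy]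
  linarith
end

section
/- Let X, X_1, X_2, ... be i.i.d. nonnegative random variables and y < E[X] (with E[X] possibly infinite). Then there exists r < 1 such that for every n ≥ 1, P(X_1 + ... + X_n ≤ n·y) ≤ r^n. -/
open MeasureTheory ProbabilityTheory Finset

/-- Cramér-type bound: let `X 0, X 1, ...` be i.i.d. nonnegative random variables and let
`y < E[X]`, where the (possibly infinite) mean `E[X] ∈ (0,∞]` is expressed as a Lebesgue
integral in `ℝ≥0∞`.  Then there exists `r < 1` such that for every `n ≥ 1`,
`P(X 0 + ⋯ + X (n-1) ≤ n·y) ≤ r^n`. -/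
theorem cramer_lower_deviation
    {Ω : Type*} [MeasureSpace Ω] [IsProbabilityMeasure (ℙ : Measure Ω)]
    (X : ℕ → Ω → ℝ)
    (hmeas : ∀ i, Measurable (X i))
    (hindep : iIndepFun X ℙ)
    (hident : ∀ i, IdentDistrib (X i) (X 0) ℙ ℙ)
    (hnonneg : ∀ i, ∀ᵐ ω ∂ℙ, 0 ≤ X i ω)
    (y : ℝ)
    (hy : ENNReal.ofReal y < ∫⁻ ω, ENNReal.ofReal (X 0 ω) ∂ℙ) :
    ∃ r : ℝ, 0 ≤ r ∧ r < 1 ∧ ∀ n : ℕ, 1 ≤ n →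
      ℙ {ω | ∑ i ∈ Finset.range n, X i ω ≤ n * y} ≤ ENNReal.ofReal (r ^ n) := by
  -- Step 1: pick a real `z` strictly between `y` and the mean
  obtain ⟨z, hz0, hyz, hzE⟩ := ENNReal.lt_iff_exists_real_btwn.mp hy
  have hyz' : y < z := by
    by_contra h
    exact absurd (ENNReal.ofReal_le_ofReal (not_lt.mp h)) (not_le.mpr hyz)
  -- Step 2: monotone convergence for truncations
  have hmono : Monotone (fun (M : ℕ) => fun ω => ENNReal.ofReal (min (X 0 ω) M)) := by
    intro a b hab
    intro ω
    exact ENNReal.ofReal_le_ofReal (min_le_min le_rfl (by exact_mod_cast hab))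
  have hsup : (∫⁻ ω, ENNReal.ofReal (X 0 ω) ∂ℙ)
      = ⨆ M : ℕ, ∫⁻ ω, ENNReal.ofReal (min (X 0 ω) M) ∂ℙ := by
    rw [← lintegral_iSup (fun M => ((hmeas 0).min measurable_const).ennreal_ofReal) hmono]
    refine lintegral_congr fun ω => ?_
    refine le_antisymm ?_ (iSup_le fun M => ENNReal.ofReal_le_ofReal (min_le_left _ _))
    have : ENNReal.ofReal (X 0 ω) = ENNReal.ofReal (min (X 0 ω) (⌈X 0 ω⌉₊ : ℕ)) := by
      rw [min_eq_left (Nat.le_ceil _)]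
    rw [this]
    exact le_iSup (fun M : ℕ => ENNReal.ofReal (min (X 0 ω) M)) _
  rw [hsup] at hzE
  obtain ⟨M, hM⟩ := lt_iSup_iff.mp hzE
  set Z : Ω → ℝ := fun ω => min (X 0 ω) M with hZ
  have hZmeas : Measurable Z := (hmeas 0).min measurable_const
  have hZnn : ∀ᵐ ω ∂ℙ, 0 ≤ Z ω := by
    filter_upwards [hnonneg 0] with ω h using le_min h (by positivity)
  have hZle : ∀ ω, Z ω ≤ (M : ℝ) := fun ω => min_le_right _ _
  have hZleX : ∀ ω, Z ω ≤ X 0 ω := fun ω => min_le_left _ _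
  have hZint : Integrable Z ℙ := by
    refine Integrable.mono' (integrable_const (M : ℝ)) hZmeas.aestronglyMeasurable ?_
    filter_upwards [hZnn] with ω h0
    rw [Real.norm_eq_abs, abs_of_nonneg h0]
    exact hZle ω
  have hμZ : z < ∫ ω, Z ω ∂ℙ := by
    have := MeasureTheory.ofReal_integral_eq_lintegral_ofReal hZint hZnn
    rw [← this] at hM
    by_contra h
    exact absurd (ENNReal.ofReal_le_ofReal (not_lt.mp h)) (not_le.mpr hM)
  set μZ : ℝ := ∫ ω, Z ω ∂ℙ with hμZdef
  have hyμ : y < μZ := hyz'.trans hμZ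
  -- Step 3: choose t
  set C : ℝ := (M : ℝ) + |y| + 1 with hC
  have hC1 : (1 : ℝ) ≤ C := by
    have h1 : (0:ℝ) ≤ (M:ℝ) := Nat.cast_nonneg M
    have h2 := abs_nonneg y
    simp only [hC]; linarith
  have hCpos : (0 : ℝ) < C := lt_of_lt_of_le one_pos hC1
  set t : ℝ := min (1 / C) ((μZ - y) / (2 * C ^ 2)) with ht
  have htpos : 0 < t := lt_min (by positivity) (div_pos (by linarith) (by positivity))
  have htC : t * C ≤ 1 := by
    have : t ≤ 1 / C := min_le_left _ _
    calc t * C ≤ (1 / C) * C := by gcongr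
    _ = 1 := by field_simp
  have htq : t * C ^ 2 ≤ (μZ - y) / 2 := by
    have h1 : t ≤ (μZ - y) / (2 * C ^ 2) := min_le_right _ _
    calc t * C ^ 2 ≤ ((μZ - y) / (2 * C ^ 2)) * C ^ 2 := by gcongr
    _ = (μZ - y) / 2 := by field_simp
  -- pointwise bound on Z - y
  have habs : ∀ᵐ ω ∂ℙ, |Z ω - y| ≤ C := by
    filter_upwards [hZnn] with ω h0
    rw [abs_sub_le_iff]
    have h1 := hZle ω
    have h2 := neg_abs_le y
    have h3 := le_abs_self y
    constructor <;> · simp only [hC]; linarith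
  clear_value Z μZ C t
  -- Step 4: the key constant c < 1
  set c : ℝ := Real.exp (t * y) * mgf (X 0) ℙ (-t) with hc
  clear_value c
  have hexpZint : Integrable (fun ω => Real.exp (-t * Z ω)) ℙ := by
    refine Integrable.mono' (integrable_const 1) ((hZmeas.const_mul (-t)).exp.aestronglyMeasurable) ?_
    filter_upwards [hZnn] with ω h0
    rw [Real.norm_eq_abs, abs_of_pos (Real.exp_pos _), Real.exp_le_one_iff]
    nlinarith
  have hexpXint : ∀ i, Integrable (fun ω => Real.exp (-t * X i ω)) ℙ := by
    intro i
    refine Integrable.mono' (integrable_const 1) (((hmeas i).const_mul (-t)).exp.aestronglyMeasurable) ?_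
    filter_upwards [hnonneg i] with ω h0
    rw [Real.norm_eq_abs, abs_of_pos (Real.exp_pos _), Real.exp_le_one_iff]
    nlinarith
  have hcnn : 0 ≤ c := hc ▸ mul_nonneg (Real.exp_pos _).le mgf_nonneg
  have hclt : c < 1 := by
    have step1 : mgf (X 0) ℙ (-t) ≤ ∫ ω, Real.exp (-t * Z ω) ∂ℙ := by
      rw [mgf]
      refine integral_mono (hexpXint 0) hexpZint fun ω => ?_
      exact Real.exp_le_exp.mpr (by nlinarith [hZleX ω])
    have step2 : Real.exp (t * y) * ∫ ω, Real.exp (-t * Z ω) ∂ℙ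
        = ∫ ω, Real.exp (-t * (Z ω - y)) ∂ℙ := by
      rw [← integral_const_mul]
      refine integral_congr_ae (Filter.Eventually.of_forall fun ω => ?_)
      dsimp only
      rw [← Real.exp_add]
      congr 1
      ring
    have hquadint : Integrable (fun ω => 1 - t * (Z ω - y) + (t * C) ^ 2) ℙ := by
      apply Integrable.add
      · exact (integrable_const 1).sub ((hZint.sub (integrable_const y)).const_mul t)
      · exact integrable_const _
    have step3 : ∫ ω, Real.exp (-t * (Z ω - y)) ∂ℙ
        ≤ ∫ ω, (1 - t * (Z ω - y) + (t * C) ^ 2) ∂ℙ := by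
      refine integral_mono_ae ?_ hquadint ?_
      · refine Integrable.mono' (integrable_const (Real.exp (t * (|y| + 1)))) (((hZmeas.sub_const y).const_mul (-t)).exp.aestronglyMeasurable) ?_
        filter_upwards [hZnn] with ω h0
        rw [Real.norm_eq_abs, abs_of_pos (Real.exp_pos _), Real.exp_le_exp]
        nlinarith [le_abs_self y, neg_abs_le y]
      · filter_upwards [habs] with ω hb
        have hx1 : |(-t) * (Z ω - y)| ≤ 1 := by
          rw [abs_mul, abs_neg, abs_of_pos htpos]
          calc t * |Z ω - y| ≤ t * C := by gcongr
          _ ≤ 1 := htC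
        have hkey := Real.abs_exp_sub_one_sub_id_le hx1
        have hb' := abs_le.mp hb
        have h2 : (Z ω - y) ^ 2 ≤ C ^ 2 := sq_le_sq' (by linarith) hb'.2
        have h3 := (abs_le.mp hkey).2
        have h4 : ((-t) * (Z ω - y)) ^ 2 ≤ (t * C) ^ 2 := by
          have h5 := mul_le_mul_of_nonneg_left h2 (sq_nonneg t)
          calc ((-t) * (Z ω - y)) ^ 2 = t ^ 2 * (Z ω - y) ^ 2 := by ring
          _ ≤ t ^ 2 * C ^ 2 := h5
          _ = (t * C) ^ 2 := by ring
        have h6 : (-t) * (Z ω - y) = -(t * (Z ω - y)) := by ring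
        linarith [h3, h4, h6]
    have step4 : ∫ ω, (1 - t * (Z ω - y) + (t * C) ^ 2) ∂ℙ
        = 1 - t * (μZ - y) + (t * C) ^ 2 := by
      have e1 : ∀ ω, (1 - t * (Z ω - y) + (t * C) ^ 2)
          = (1 + t * y + (t * C) ^ 2) + (-t) * Z ω := fun ω => by ring
      simp_rw [e1]
      rw [integral_add (integrable_const _) (hZint.const_mul (-t)), integral_const,
        integral_const_mul, ← hμZdef]
      simp only [measure_univ, ENNReal.toReal_one, one_smul, probReal_univ]
      ring
    have hlast : (1 : ℝ) - t * (μZ - y) + (t * C) ^ 2 ≤ 1 - t * (μZ - y) / 2 := by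
      have : (t * C) ^ 2 = t * (t * C ^ 2) := by ring
      nlinarith [htq, htpos]
    have : c ≤ 1 - t * (μZ - y) / 2 := by
      calc c ≤ Real.exp (t * y) * ∫ ω, Real.exp (-t * Z ω) ∂ℙ := by
              rw [hc]
              exact mul_le_mul_of_nonneg_left step1 (Real.exp_pos _).le
      _ = ∫ ω, Real.exp (-t * (Z ω - y)) ∂ℙ := step2
      _ ≤ 1 - t * (μZ - y) + (t * C) ^ 2 := step3.trans_eq step4
      _ ≤ 1 - t * (μZ - y) / 2 := hlast
    have : c < 1 := by nlinarith [htpos, hyμ]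
    exact this
  -- Step 5: conclude via Chernoff bound
  refine ⟨c, hcnn, hclt, fun n hn => ?_⟩
  set S : Ω → ℝ := ∑ i ∈ Finset.range n, X i with hS
  clear_value S
  have hSmeas : Measurable S := by
    rw [hS, show (∑ i ∈ Finset.range n, X i) = fun a => ∑ i ∈ Finset.range n, X i a
      from funext fun a => Finset.sum_apply a _ _]
    exact Finset.measurable_sum _ fun i _ => hmeas i
  have hSint : Integrable (fun ω => Real.exp ((-t) * S ω)) ℙ := by
    refine Integrable.mono' (integrable_const 1)
      ((hSmeas.const_mul (-t)).exp.aestronglyMeasurable) ?_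
    have hae : ∀ᵐ ω ∂ℙ, ∀ i ∈ Finset.range n, 0 ≤ X i ω :=
      (ae_ball_iff (Finset.countable_toSet _)).mpr fun i _ => hnonneg i
    filter_upwards [hae] with ω h0
    rw [Real.norm_eq_abs, abs_of_pos (Real.exp_pos _), Real.exp_le_one_iff]
    have : 0 ≤ S ω := by
      rw [hS, Finset.sum_apply]
      exact Finset.sum_nonneg h0
    nlinarith
  have hcher := measure_le_le_exp_mul_mgf (μ := ℙ) (X := S) (n * y) (neg_nonpos.mpr htpos.le) hSint
  have hmgfS : mgf S ℙ (-t) = (mgf (X 0) ℙ (-t)) ^ n := by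
    rw [hS, hindep.mgf_sum hmeas (Finset.range n)]
    have heq : ∀ i, mgf (X i) ℙ (-t) = mgf (X 0) ℙ (-t) := fun i =>
      ((hident i).comp (Measurable.exp (measurable_const.mul measurable_id'))).integral_eq
    rw [Finset.prod_congr rfl fun i _ => heq i, Finset.prod_const, Finset.card_range]
  have hrhs : Real.exp (-(-t) * (n * y)) * mgf S ℙ (-t) = c ^ n := by
    rw [hmgfS, hc, mul_pow, ← Real.exp_nat_mul,
      show -(-t) * ((n : ℝ) * y) = (n : ℝ) * (t * y) from by ring]
  rw [hrhs] at hcher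
  have hset : {ω | ∑ i ∈ Finset.range n, X i ω ≤ n * y} = {ω | S ω ≤ n * y} := by
    ext ω; simp [hS, Finset.sum_apply]
  rw [hset]
  calc ℙ {ω | S ω ≤ n * y} = ENNReal.ofReal (ℙ {ω | S ω ≤ n * y}).toReal := by
        rw [ENNReal.ofReal_toReal (measure_ne_top _ _)]
  _ ≤ ENNReal.ofReal (c ^ n) := ENNReal.ofReal_le_ofReal hcher
end

section
/- Let X be a nonnegative, not identically zero, integrable integer-valued random variable. Define S_0 := 0, S_n := X_1 + ... + X_n for i.i.d. copies X_i of X, and R_n(x) := ∏_{i=0}^n (1 + E[X]/(x + S_i)) for x > 0. Then E[R_n(x)] ≥ 1 + (n+1)·E[X]/x. -/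
open MeasureTheory ProbabilityTheory Finset

set_option maxHeartbeats 1000000

private lemma bdd_integrable {α : Type*} [MeasurableSpace α] (μ : Measure α)
    [IsProbabilityMeasure μ] {f : α → ℝ} (hf : AEStronglyMeasurable f μ) (C : ℝ)
    (h : ∀ a, |f a| ≤ C) : Integrable f μ :=
  (integrable_const C).mono' hf (Filter.Eventually.of_forall h)

private lemma tangent_line {y c t : ℝ} (hy : 0 < y) (hc : 0 ≤ c) (ht : 0 ≤ t) :
    (y + c)⁻¹ - (t - c) / (y + c) ^ 2 ≤ (y + t)⁻¹ := by
  have h1 : 0 < y + t := by linarith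
  have h2 : 0 < y + c := by linarith
  have key : (y + t)⁻¹ - ((y + c)⁻¹ - (t - c) / (y + c) ^ 2)
      = (t - c) ^ 2 / ((y + t) * (y + c) ^ 2) := by
    field_simp
    ring
  have hnn : 0 ≤ (t - c) ^ 2 / ((y + t) * (y + c) ^ 2) := by positivity
  linarith

private lemma key_ind {Ω : Type*} [MeasureSpace Ω] [IsProbabilityMeasure (ℙ : Measure Ω)]
    (X : ℕ → Ω → ℕ)
    (hmeas : ∀ i, Measurable (X i))
    (hindep : iIndepFun X ℙ)
    (hident : ∀ i, IdentDistrib (X i) (X 0) ℙ ℙ)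
    (hint : Integrable (fun ω => (X 0 ω : ℝ)) ℙ)
    (m : ℝ) (hm : m = ∫ ω, (X 0 ω : ℝ) ∂ℙ) :
    ∀ (k r : ℕ) (y : ℝ), 0 < y →
      1 + k * m / y ≤
        ∫ ω, ∏ i ∈ Finset.range k, (1 + m / (y + ∑ j ∈ Finset.range i, (X (r + j) ω : ℝ))) ∂ℙ := by
  have hm0 : 0 ≤ m := by
    rw [hm]; exact integral_nonneg fun ω => by positivity
  intro k
  induction k with
  | zero => intro r y hy; simp
  | succ k IH =>
    intro r y hy
    set Y : Ω → (Fin k → ℕ) := fun ω i => X (r + 1 + i) ω with hYdef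
    have hYmeas : Measurable Y := measurable_pi_lambda _ fun i => hmeas _
    set vv : (Fin k → ℕ) → ℕ → ℝ :=
      fun v j => if h : j < k then (v ⟨j, h⟩ : ℝ) else 0 with hvv
    set F : ℕ → (Fin k → ℕ) → ℝ :=
      fun a v => ∏ i ∈ Finset.range k,
        (1 + m / (y + a + ∑ j ∈ Finset.range i, vv v j)) with hF
    clear_value Y vv F
    have hvv_nonneg : ∀ v j, 0 ≤ vv v j := by
      intro v j; simp only [hvv]; split <;> positivity
    have hsum_nonneg : ∀ (v : Fin k → ℕ) i, 0 ≤ ∑ j ∈ Finset.range i, vv v j :=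
      fun v i => Finset.sum_nonneg fun j _ => hvv_nonneg v j
    have hfac : ∀ (a : ℕ) (v : Fin k → ℕ) i, 1 ≤ 1 + m / (y + a + ∑ j ∈ Finset.range i, vv v j) ∧
        1 + m / (y + a + ∑ j ∈ Finset.range i, vv v j) ≤ 1 + m / y := by
      intro a v i
      have ha : (0:ℝ) ≤ (a : ℝ) := Nat.cast_nonneg a
      have hden : y ≤ y + a + ∑ j ∈ Finset.range i, vv v j := by
        have hs := hsum_nonneg v i
        linarith
      have hden0 : 0 < y + a + ∑ j ∈ Finset.range i, vv v j := lt_of_lt_of_le hy hden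
      constructor
      · have : 0 ≤ m / (y + a + ∑ j ∈ Finset.range i, vv v j) := by positivity
        linarith
      · gcongr
    have hF1 : ∀ a v, 1 ≤ F a v := by
      intro a v
      simp only [hF]
      calc (1:ℝ) = ∏ _i ∈ Finset.range k, 1 := by simp
        _ ≤ _ := Finset.prod_le_prod (fun i _ => zero_le_one) (fun i _ => (hfac a v i).1)
    have hFub : ∀ a v, F a v ≤ (1 + m / y) ^ k := by
      intro a v
      simp only [hF]
      calc (∏ i ∈ Finset.range k, (1 + m / (y + a + ∑ j ∈ Finset.range i, vv v j)))
            ≤ ∏ _i ∈ Finset.range k, (1 + m / y) :=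
            Finset.prod_le_prod (fun i _ => le_trans zero_le_one (hfac a v i).1)
              (fun i _ => (hfac a v i).2)
        _ = (1 + m / y) ^ k := by simp
    have hFbound : ∀ a v, |F a v| ≤ (1 + m / y) ^ k := by
      intro a v
      rw [abs_of_nonneg (le_trans zero_le_one (hF1 a v))]
      exact hFub a v
    have hFm : Measurable (fun p : ℕ × (Fin k → ℕ) => F p.1 p.2) := by
      simp only [hF]
      apply Finset.measurable_prod
      intro i _
      apply Measurable.add measurable_const
      apply Measurable.div measurable_const
      apply Measurable.add
      · exact Measurable.add measurable_const (measurable_from_top.comp measurable_fst)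
      · apply Finset.measurable_sum
        intro j _
        simp only [hvv]
        by_cases h : j < k
        · simp only [dif_pos h]
          exact measurable_from_top.comp ((measurable_pi_apply _).comp measurable_snd)
        · simp only [dif_neg h]
          exact measurable_const
    -- independence of X r and Y
    set T : Finset ℕ := (Finset.range k).image (fun j => r + 1 + j) with hT
    have hmemT : ∀ i : Fin k, r + 1 + (i : ℕ) ∈ T :=
      fun i => Finset.mem_image.mpr ⟨i, Finset.mem_range.mpr i.isLt, rfl⟩
    have hdisj : Disjoint ({r} : Finset ℕ) T := by
      simp only [Finset.disjoint_singleton_left, hT, Finset.mem_image, Finset.mem_range, not_exists]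
      intro j
      omega
    have hbase := hindep.indepFun_finset {r} T hdisj hmeas
    have hXY : IndepFun (X r) Y ℙ := by
      have hcomp := hbase.comp
        (φ := fun v : (↥({r} : Finset ℕ) → ℕ) => v ⟨r, Finset.mem_singleton_self r⟩)
        (ψ := fun (v : ↥T → ℕ) (i : Fin k) => v ⟨r + 1 + i, hmemT i⟩)
        (_mγ := inferInstance) (_mγ' := inferInstance)
        (measurable_pi_apply _)
        (measurable_pi_lambda _ fun i => measurable_pi_apply _)
      rw [hYdef]
      exact hcomp
    have hXrae : AEMeasurable (X r) (ℙ : Measure _) := (hmeas r).aemeasurable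
    have hYae : AEMeasurable Y (ℙ : Measure _) := hYmeas.aemeasurable
    have hprod := (indepFun_iff_map_prod_eq_prod_map_map hXrae hYae).mp hXY
    set μX := Measure.map (X r) ℙ with hμX
    set μY := Measure.map Y ℙ with hμY
    haveI : IsProbabilityMeasure μX := Measure.isProbabilityMeasure_map hXrae
    haveI : IsProbabilityMeasure μY := Measure.isProbabilityMeasure_map hYae
    have hFint : Integrable (fun p : ℕ × (Fin k → ℕ) => F p.1 p.2) (μX.prod μY) :=
      bdd_integrable _ hFm.aestronglyMeasurable _ (fun p => hFbound p.1 p.2)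
    -- pointwise factorization
    have hpt : ∀ ω, (∏ i ∈ Finset.range (k+1),
        (1 + m / (y + ∑ j ∈ Finset.range i, (X (r + j) ω : ℝ))))
        = (1 + m / y) * F (X r ω) (Y ω) := by
      intro ω
      rw [Finset.prod_range_succ']
      simp only [Finset.range_zero, Finset.sum_empty, add_zero, Nat.add_zero]
      rw [mul_comm]
      congr 1
      simp only [hF]
      refine Finset.prod_congr rfl fun i hi => ?_
      have hik : i < k := Finset.mem_range.mp hi
      rw [Finset.sum_range_succ']
      have hsum : (∑ j ∈ Finset.range i, (X (r + (j+1)) ω : ℝ))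
          = ∑ j ∈ Finset.range i, vv (Y ω) j := by
        refine Finset.sum_congr rfl fun j hj => ?_
        have hjk : j < k := lt_trans (Finset.mem_range.mp hj) hik
        simp only [hvv, hYdef, dif_pos hjk]
        norm_cast
        congr 1
        omega
      rw [hsum]
      simp only [Nat.add_zero]
      ring_nf
    -- Fubini
    have hstep1 : ∫ ω, F (X r ω) (Y ω) ∂ℙ = ∫ a, (∫ v, F a v ∂μY) ∂μX := by
      have h1 : ∫ ω, F (X r ω) (Y ω) ∂ℙ
          = ∫ p, F p.1 p.2 ∂(Measure.map (fun ω => (X r ω, Y ω)) ℙ) := by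
        rw [integral_map (hXrae.prodMk hYae) hFm.aestronglyMeasurable]
      rw [h1, hprod, integral_prod _ hFint]
    have hinner : ∀ a : ℕ, 1 + (k:ℝ) * m / (y + a) ≤ ∫ v, F a v ∂μY := by
      intro a
      have hFa : Measurable (fun v : Fin k → ℕ => F a v) := by
        have h' : Measurable (fun v : Fin k → ℕ => (a, v)) :=
          Measurable.prodMk measurable_const measurable_id
        exact hFm.comp h'
      rw [hμY, integral_map hYae hFa.aestronglyMeasurable]
      have hIH := IH (r+1) (y + a) (by positivity)
      have heq : (∫ ω, ∏ i ∈ Finset.range k,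
          (1 + m / (y + (a:ℝ) + ∑ j ∈ Finset.range i, (X (r + 1 + j) ω : ℝ))) ∂ℙ)
          = ∫ ω, F a (Y ω) ∂ℙ := by
        refine integral_congr_ae (Filter.Eventually.of_forall fun ω => ?_)
        simp only [hF]
        refine Finset.prod_congr rfl fun i hi => ?_
        have hik : i < k := Finset.mem_range.mp hi
        have hsum2 : (∑ j ∈ Finset.range i, (X (r + 1 + j) ω : ℝ))
            = ∑ j ∈ Finset.range i, vv (Y ω) j := by
          refine Finset.sum_congr rfl fun j hj => ?_
          have hjk : j < k := lt_trans (Finset.mem_range.mp hj) hik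
          simp only [hvv, hYdef, dif_pos hjk]
        rw [hsum2]
      rw [← heq]
      exact hIH
    -- integrability on μX
    have hcastm : Measurable (fun a : ℕ => (a : ℝ)) := measurable_from_top
    have hcast_int : Integrable (fun a : ℕ => (a : ℝ)) μX := by
      rw [hμX, integrable_map_measure hcastm.aestronglyMeasurable hXrae]
      exact ((hident r).comp hcastm).integrable_iff.mpr hint
    have hmean : ∫ a, (a:ℝ) ∂μX = m := by
      rw [hμX, integral_map hXrae hcastm.aestronglyMeasurable, hm]
      exact ((hident r).comp hcastm).integral_eq
    have hinv_int : Integrable (fun a : ℕ => (y + (a:ℝ))⁻¹) μX :=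
      bdd_integrable _ (measurable_from_top (f := fun a : ℕ => (y + (a:ℝ))⁻¹)).aestronglyMeasurable
        y⁻¹ (fun a => by
          have ha : (0:ℝ) ≤ (a:ℝ) := Nat.cast_nonneg a
          rw [abs_of_nonneg (by positivity)]
          gcongr
          · linarith)
    have hlow_int : Integrable (fun a : ℕ => 1 + (k:ℝ) * m / (y + (a:ℝ))) μX :=
      bdd_integrable _ (measurable_from_top
          (f := fun a : ℕ => 1 + (k:ℝ) * m / (y + (a:ℝ)))).aestronglyMeasurable
        (1 + (k:ℝ) * m / y) (fun a => by
          have ha : (0:ℝ) ≤ (a:ℝ) := Nat.cast_nonneg a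
          have hk0 : (0:ℝ) ≤ (k:ℝ) * m := by positivity
          rw [abs_of_nonneg (by positivity)]
          gcongr
          · linarith)
    have hup_int : Integrable (fun a : ℕ => ∫ v, F a v ∂μY) μX := hFint.integral_prod_left
    have hmono : (∫ a, (1 + (k:ℝ) * m / (y + (a:ℝ))) ∂μX) ≤ ∫ a, (∫ v, F a v ∂μY) ∂μX :=
      integral_mono hlow_int hup_int hinner
    -- value of the lower integral
    have hjensen : (y + m)⁻¹ ≤ ∫ a, (y + (a:ℝ))⁻¹ ∂μX := by
      have hpt2 : ∀ a : ℕ, (y + m)⁻¹ - ((a:ℝ) - m) / (y + m)^2 ≤ (y + (a:ℝ))⁻¹ :=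
        fun a => tangent_line hy hm0 (Nat.cast_nonneg a)
      have h1 : Integrable (fun a : ℕ => ((a:ℝ) - m) / (y + m)^2) μX := by
        have h2 := (hcast_int.sub (integrable_const m)).div_const ((y + m)^2)
        simpa [Pi.sub_apply] using h2
      have hint2 : Integrable (fun a : ℕ => (y + m)⁻¹ - ((a:ℝ) - m) / (y + m)^2) μX :=
        (integrable_const _).sub h1
      have hmono2 := integral_mono hint2 hinv_int hpt2
      have hval : (∫ a, ((y + m)⁻¹ - ((a:ℝ) - m) / (y + m)^2) ∂μX) = (y + m)⁻¹ := by
        rw [integral_sub (integrable_const _) h1, integral_div,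
          integral_sub hcast_int (integrable_const m), hmean]
        simp
      rw [hval] at hmono2
      exact hmono2
    have hlowval : (∫ a, (1 + (k:ℝ) * m / (y + (a:ℝ))) ∂μX)
        = 1 + (k:ℝ) * m * ∫ a, (y + (a:ℝ))⁻¹ ∂μX := by
      have hrw : ∀ a : ℕ, 1 + (k:ℝ) * m / (y + (a:ℝ)) = 1 + (k:ℝ) * m * (y + (a:ℝ))⁻¹ :=
        fun a => by rw [div_eq_mul_inv]
      simp_rw [hrw]
      rw [integral_add (integrable_const _) (hinv_int.const_mul _), integral_const_mul _ _]
      simp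
    -- assemble
    have hconstpos : (0:ℝ) ≤ 1 + m / y := by positivity
    have hk0 : (0:ℝ) ≤ (k:ℝ) * m := by positivity
    have hym : (0:ℝ) < y + m := by linarith
    have hintF : (1 + (k:ℝ) * m * (y + m)⁻¹) ≤ ∫ ω, F (X r ω) (Y ω) ∂ℙ := by
      rw [hstep1]
      refine le_trans ?_ hmono
      rw [hlowval]
      have := mul_le_mul_of_nonneg_left hjensen hk0
      linarith
    have hgoal_eq : (∫ ω, ∏ i ∈ Finset.range (k+1),
        (1 + m / (y + ∑ j ∈ Finset.range i, (X (r + j) ω : ℝ))) ∂ℙ)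
        = (1 + m / y) * ∫ ω, F (X r ω) (Y ω) ∂ℙ := by
      rw [← integral_const_mul _ _]
      exact integral_congr_ae (Filter.Eventually.of_forall hpt)
    rw [hgoal_eq]
    have hfinal : (1 + m / y) * (1 + (k:ℝ) * m * (y + m)⁻¹) = 1 + ((k:ℝ) + 1) * m / y := by
      field_simp
      ring
    calc (1:ℝ) + (k+1 : ℕ) * m / y = 1 + ((k:ℝ) + 1) * m / y := by push_cast; ring
      _ = (1 + m / y) * (1 + (k:ℝ) * m * (y + m)⁻¹) := hfinal.symm
      _ ≤ (1 + m / y) * ∫ ω, F (X r ω) (Y ω) ∂ℙ :=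
          mul_le_mul_of_nonneg_left hintF hconstpos

/-- Let `X 0, X 1, ...` be i.i.d. nonnegative integrable integer-valued random variables, not
identically zero, with partial sums `S i` (`S 0 = 0`) and
`R_n(x) := ∏_{i=0}^{n} (1 + E[X]/(x + S i))` for `x > 0`.
Then `E[R_n(x)] ≥ 1 + (n+1)·E[X]/x`. -/
theorem product_expectation_lower_bound
    {Ω : Type*} [MeasureSpace Ω] [IsProbabilityMeasure (ℙ : Measure Ω)]
    (X : ℕ → Ω → ℕ)
    (hmeas : ∀ i, Measurable (X i))
    (hindep : iIndepFun X ℙ)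
    (hident : ∀ i, IdentDistrib (X i) (X 0) ℙ ℙ)
    (hint : Integrable (fun ω => (X 0 ω : ℝ)) ℙ)
    (hnz : ℙ {ω | X 0 ω = 0} < 1)
    (m : ℝ) (hm : m = ∫ ω, (X 0 ω : ℝ) ∂ℙ)
    (S : ℕ → Ω → ℝ) (hS : ∀ i ω, S i ω = ∑ j ∈ Finset.range i, (X j ω : ℝ))
    (x : ℝ) (hx : 0 < x) (n : ℕ) :
    1 + (n + 1) * m / x ≤
      ∫ ω, ∏ i ∈ Finset.range (n + 1), (1 + m / (x + S i ω)) ∂ℙ := by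
  have key := key_ind X hmeas hindep hident hint m hm (n + 1) 0 x hx
  have heq : (∫ ω, ∏ i ∈ Finset.range (n+1),
      (1 + m / (x + ∑ j ∈ Finset.range i, (X (0 + j) ω : ℝ))) ∂ℙ)
      = ∫ ω, ∏ i ∈ Finset.range (n + 1), (1 + m / (x + S i ω)) ∂ℙ := by
    refine integral_congr_ae (Filter.Eventually.of_forall fun ω => ?_)
    refine Finset.prod_congr rfl fun i _ => ?_
    rw [hS]
    simp
  rw [heq] at key
  push_cast at key ⊢
  linarith
end

section
/- Let X be a nonnegative integrable random variable with r := P(X = 0) ∈ (0,1), and let m_0 := E[X]·r/(1−r). If 0 < x ≤ m_0, then limsup_n E[R_n(x)]/n = ∞, where R_n(x) := ∏_{i=0}^n (1 + E[X]/(x + S_i)) and S_i are the partial sums of i.i.d. copies of X. -/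
open MeasureTheory ProbabilityTheory Finset Filter Topology

lemma aux_sum_le_prod (J : ℕ) (c : ℕ → ℝ) (h : ∀ j, 0 ≤ c j) :
    ∑ j ∈ Finset.range J, c j ≤ ∏ j ∈ Finset.range J, (1 + c j) := by
  induction J with
  | zero => simp
  | succ J ih =>
    rw [Finset.sum_range_succ, Finset.prod_range_succ]
    have h1 : (1:ℝ) ≤ ∏ j ∈ Finset.range J, (1 + c j) := by
      calc (1:ℝ) = ∏ j ∈ Finset.range J, 1 := by simp
      _ ≤ _ := Finset.prod_le_prod (by simp) (fun j _ => by linarith [h j])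
    nlinarith [h J, ih]

lemma aux_harmonic (b : ℝ) (hb : 0 < b) (d : ℝ) (hd : 0 < d) :
    Tendsto (fun J : ℕ => ∑ j ∈ Finset.range J, b / (d + 2 * b * j)) atTop atTop := by
  have hmono : ∀ J, (b/(d+2*b)) * ∑ j ∈ Finset.range J, (1:ℝ)/(j+1) ≤
      ∑ j ∈ Finset.range J, b / (d + 2 * b * j) := by
    intro J
    rw [Finset.mul_sum]
    refine Finset.sum_le_sum fun j _ => ?_
    rw [div_mul_div_comm, mul_one]
    apply div_le_div_of_nonneg_left hb.le ?_ ?_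
    · positivity
    · have : (0:ℝ) ≤ (j:ℝ) := Nat.cast_nonneg j
      nlinarith
  refine tendsto_atTop_mono hmono ?_
  exact Filter.Tendsto.const_mul_atTop (by positivity)
    Real.tendsto_sum_range_one_div_nat_succ_atTop

set_option maxHeartbeats 1000000 in
/-- Let `X 0, X 1, ...` be i.i.d. nonnegative integrable random variables with `E[X] > 0` and
`r := P(X = 0) ∈ (0,1)`, and set `m₀ := E[X]·r/(1−r)`.  With `S i` the partial sums
(`S 0 = 0`) and `R_n(x) := ∏_{i=0}^{n} (1 + E[X]/(x + S i))`, if `0 < x ≤ m₀` then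
`limsup_n E[R_n(x)]/n = ∞` (stated in `ℝ≥0∞`; the integrands are nonnegative). -/
theorem rho_infinite_below_m0
    {Ω : Type*} [MeasureSpace Ω] [IsProbabilityMeasure (ℙ : Measure Ω)]
    (X : ℕ → Ω → ℝ)
    (hmeas : ∀ i, Measurable (X i))
    (hindep : iIndepFun X ℙ)
    (hident : ∀ i, IdentDistrib (X i) (X 0) ℙ ℙ)
    (hnonneg : ∀ i, ∀ᵐ ω ∂ℙ, 0 ≤ X i ω)
    (hint : Integrable (X 0) ℙ)
    (m : ℝ) (hm : m = ∫ ω, X 0 ω ∂ℙ) (hmpos : 0 < m)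
    (r : ℝ) (hr : r = (ℙ {ω | X 0 ω = 0}).toReal) (hr0 : 0 < r) (hr1 : r < 1)
    (S : ℕ → Ω → ℝ) (hS : ∀ i ω, S i ω = ∑ j ∈ Finset.range i, X j ω)
    (x : ℝ) (hx : 0 < x) (hxm : x ≤ m * r / (1 - r)) :
    Filter.limsup (fun n : ℕ =>
        ENNReal.ofReal ((∫ ω, ∏ i ∈ Finset.range (n + 1), (1 + m / (x + S i ω)) ∂ℙ) / n))
      Filter.atTop = ⊤ := by
  classical
  -- all X integrable, with mean m
  have hXint : ∀ i, Integrable (X i) ℙ := fun i => (hident i).integrable_iff.mpr hint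
  have hXmean : ∀ i, ∫ ω, X i ω ∂ℙ = m := fun i => by rw [(hident i).integral_eq, hm]
  -- choice of C
  obtain ⟨C, hC⟩ : ∃ C : ℕ, 0 < (ℙ (X 0 ⁻¹' Set.Ioc 0 (C:ℝ))).toReal := by
    by_contra h
    push_neg at h
    have hz : ∀ C : ℕ, ℙ (X 0 ⁻¹' Set.Ioc 0 (C:ℝ)) = 0 := by
      intro C
      have h2 : (ℙ (X 0 ⁻¹' Set.Ioc 0 (C:ℝ))).toReal = 0 :=
        le_antisymm (h C) ENNReal.toReal_nonneg
      exact ((ENNReal.toReal_eq_zero_iff _).mp h2).resolve_right (measure_ne_top ℙ _)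
    have hpos : ℙ {ω | 0 < X 0 ω} = 0 := by
      have hsub : {ω | 0 < X 0 ω} ⊆ ⋃ C : ℕ, X 0 ⁻¹' Set.Ioc 0 (C:ℝ) := by
        intro ω hω
        obtain ⟨C, hCC⟩ := exists_nat_ge (X 0 ω)
        exact Set.mem_iUnion.2 ⟨C, hω, hCC⟩
      exact measure_mono_null hsub (measure_iUnion_null fun C => hz C)
    have hne : ℙ {ω | X 0 ω = 0} < 1 := by
      by_contra h2
      push_neg at h2
      have h3 : (1:ℝ) ≤ (ℙ {ω | X 0 ω = 0}).toReal := by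
        have := ENNReal.toReal_mono (measure_ne_top _ _) h2
        simpa using this
      rw [← hr] at h3; linarith
    have hcompl : ℙ ({ω | X 0 ω = 0} ∪ {ω | 0 < X 0 ω})ᶜ = 0 := by
      have hae : ∀ᵐ ω ∂ℙ, ω ∈ ({ω | X 0 ω = 0} ∪ {ω | 0 < X 0 ω}) := by
        filter_upwards [hnonneg 0] with ω h0
        rcases eq_or_lt_of_le h0 with h'|h'
        · exact Or.inl h'.symm
        · exact Or.inr h'
      exact ae_iff.mp hae
    have h5 : (1:ENNReal) ≤ ℙ ({ω | X 0 ω = 0} ∪ {ω | 0 < X 0 ω})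
        + ℙ ({ω | X 0 ω = 0} ∪ {ω | 0 < X 0 ω})ᶜ := by
      rw [← measure_univ (μ := (ℙ : Measure Ω)),
        ← Set.union_compl_self ({ω | X 0 ω = 0} ∪ {ω | 0 < X 0 ω})]
      exact measure_union_le _ _
    rw [hcompl, add_zero] at h5
    have h4 : ℙ ({ω | X 0 ω = 0} ∪ {ω | 0 < X 0 ω}) ≤ ℙ {ω | X 0 ω = 0} + ℙ {ω | 0 < X 0 ω} :=
      measure_union_le _ _
    rw [hpos, add_zero] at h4
    exact absurd (h5.trans h4) (not_le.mpr hne)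
  set q : ℝ := (ℙ (X 0 ⁻¹' Set.Ioc 0 (C:ℝ))).toReal with hqdef
  -- key ratio inequality
  have hrx : 1 ≤ r * (1 + m / x) := by
    have h1 : x * (1 - r) ≤ m * r := by
      rw [le_div_iff₀ (by linarith)] at hxm; linarith
    rw [mul_add, mul_one, ← sub_le_iff_le_add', mul_div_assoc', le_div_iff₀ hx]
    nlinarith
  have h1mx : (1:ℝ) ≤ 1 + m / x := by
    have : 0 ≤ m / x := by positivity
    linarith
  -- the basic sets
  set sets : ℕ → ℕ → Set ℝ := fun k i => if i = k then Set.Ioc 0 (C:ℝ) else {0} with hsets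
  set B : ℕ → Set Ω := fun k => ⋂ i ∈ Finset.range (k+1), X i ⁻¹' sets k i with hB
  set D : ℕ → ℕ → Set Ω :=
    fun k j => {ω | ∑ l ∈ Finset.Ico (k+1) (k+1+j), X l ω ≤ 2*m*j} with hD
  have hsetsmeas : ∀ k i, MeasurableSet (sets k i) := by
    intro k i
    by_cases h : i = k <;> simp [hsets, h, measurableSet_Ioc]
  have hBmeas : ∀ k, MeasurableSet (B k) :=
    fun k => MeasurableSet.biInter (Finset.range (k+1)).countable_toSet
      (fun i _ => (hsetsmeas k i).preimage (hmeas i))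
  have hDmeas : ∀ k j, MeasurableSet (D k j) :=
    fun k j => measurableSet_le (Finset.measurable_sum _ fun l _ => hmeas l) measurable_const
  -- probability of B k
  have hr' : (ℙ (X 0 ⁻¹' ({0}:Set ℝ))).toReal = r := by
    rw [hr]; congr 1
  have hPB : ∀ k, (ℙ (B k)).toReal = r^k * q := by
    intro k
    have hmul := hindep.measure_inter_preimage_eq_mul (S := Finset.range (k+1))
      (sets := sets k) (fun i _ => hsetsmeas k i)
    have hprod : ∏ i ∈ Finset.range (k+1), ℙ (X i ⁻¹' sets k i)
        = (ℙ (X 0 ⁻¹' ({0}:Set ℝ)))^k * ℙ (X 0 ⁻¹' Set.Ioc 0 (C:ℝ)) := by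
      rw [Finset.prod_range_succ]
      congr 1
      · have : ∀ i ∈ Finset.range k, ℙ (X i ⁻¹' sets k i) = ℙ (X 0 ⁻¹' ({0}:Set ℝ)) := by
          intro i hi
          have hik : i ≠ k := Nat.ne_of_lt (Finset.mem_range.mp hi)
          rw [hsets]
          simp only [hik, if_false]
          exact (hident i).measure_mem_eq (measurableSet_singleton 0)
        rw [Finset.prod_congr rfl this, Finset.prod_const, Finset.card_range]
      · rw [hsets]
        simp only [if_pos rfl]
        exact (hident k).measure_mem_eq measurableSet_Ioc
    rw [hB]
    simp only []
    rw [hmul, hprod, ENNReal.toReal_mul, ENNReal.toReal_pow, hr', hqdef]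
  -- probability of D k j
  have hPD : ∀ k j, (1:ℝ)/2 ≤ (ℙ (D k j)).toReal := by
    intro k j
    rcases Nat.eq_zero_or_pos j with hj | hj
    · subst hj
      have hDu : D k 0 = Set.univ := by
        ext ω
        simp [hD]
      rw [hDu]
      simp
      norm_num
    · set Y : Ω → ℝ := fun ω => ∑ l ∈ Finset.Ico (k+1) (k+1+j), X l ω with hY
      have hYint : Integrable Y ℙ := integrable_finset_sum _ fun l _ => hXint l
      have hYnn : 0 ≤ᵐ[ℙ] Y := by
        filter_upwards [ae_all_iff.mpr hnonneg] with ω hω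
        exact Finset.sum_nonneg fun l _ => hω l
      have hYmean : ∫ ω, Y ω ∂ℙ = j * m := by
        rw [hY]
        simp only []
        rw [integral_finset_sum _ fun l _ => hXint l]
        rw [Finset.sum_congr rfl fun l _ => hXmean l, Finset.sum_const, Nat.card_Ico]
        have hcard : k+1+j-(k+1) = j := by omega
        rw [hcard, nsmul_eq_mul]
      have hMar := mul_meas_ge_le_integral_of_nonneg hYnn hYint (2*m*j)
      rw [hYmean, measureReal_def] at hMar
      have hup : (ℙ {ω | 2*m*j ≤ Y ω}).toReal ≤ 1/2 := by
        have hj' : (0:ℝ) < j := by exact_mod_cast hj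
        nlinarith [ENNReal.toReal_nonneg (a := ℙ {ω | 2*m*j ≤ Y ω}), mul_pos hmpos hj']
      have hcover : (1:ENNReal) ≤ ℙ (D k j) + ℙ {ω | 2*m*j ≤ Y ω} := by
        rw [← measure_univ (μ := (ℙ : Measure Ω))]
        refine (measure_mono ?_).trans (measure_union_le _ _)
        intro ω _
        rcases le_total (Y ω) (2*m*j) with h'|h'
        · exact Or.inl h'
        · exact Or.inr h'
      have hfin : ℙ (D k j) + ℙ {ω | 2*m*j ≤ Y ω} ≠ ⊤ :=
        ENNReal.add_ne_top.mpr ⟨measure_ne_top _ _, measure_ne_top _ _⟩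
      have h6 : (1:ℝ) ≤ (ℙ (D k j)).toReal + (ℙ {ω | 2*m*j ≤ Y ω}).toReal := by
        have := ENNReal.toReal_mono hfin hcover
        rwa [ENNReal.toReal_one, ENNReal.toReal_add (measure_ne_top _ _) (measure_ne_top _ _)]
          at this
      linarith
  -- independence
  have hPBD : ∀ k j, ℙ (B k ∩ D k j) = ℙ (B k) * ℙ (D k j) := by
    intro k j
    set Sf := Finset.range (k+1) with hSf
    set Tf := Finset.Ico (k+1) (k+1+j) with hTf
    have hdisj : Disjoint Sf Tf := by
      rw [Finset.disjoint_left]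
      intro i hiS hiT
      rw [hSf, Finset.mem_range] at hiS
      rw [hTf, Finset.mem_Ico] at hiT
      omega
    have hIF := hindep.indepFun_finset Sf Tf hdisj hmeas
    set MS : Set ((i : Sf) → ℝ) := Set.univ.pi (fun i => sets k i) with hMS
    have hMSm : MeasurableSet MS := MeasurableSet.univ_pi fun i => hsetsmeas k i
    set MT : Set ((i : Tf) → ℝ) := {v | ∑ i, v i ≤ 2*m*j} with hMT
    have hMTm : MeasurableSet MT :=
      measurableSet_le (Finset.measurable_sum _ fun i _ => measurable_pi_apply i)
        measurable_const
    have hpre1 : (fun ω (i : Sf) => X i ω) ⁻¹' MS = B k := by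
      ext ω
      simp only [hMS, Set.mem_preimage, Set.mem_pi, Set.mem_univ, forall_true_left, hB,
        Set.mem_iInter, Subtype.forall, Finset.mem_coe, hSf, Finset.mem_range, forall_true_left]
    have hpre2 : (fun ω (i : Tf) => X i ω) ⁻¹' MT = D k j := by
      ext ω
      simp only [Set.mem_preimage, hMT, Set.mem_setOf_eq, hD]
      rw [Finset.sum_coe_sort Tf (fun l => X l ω)]
    have hmul2 := hIF.measure_inter_preimage_eq_mul MS MT hMSm hMTm
    rw [hpre1, hpre2] at hmul2
    exact hmul2
  -- weights
  set a : ℕ → ℝ := fun j => m / ((x + C) + 2*m*j) with ha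
  have hapos : ∀ j, 0 < a j := by
    intro j
    have : (0:ℝ) ≤ (j:ℝ) := Nat.cast_nonneg j
    have : (0:ℝ) < (x + C) + 2*m*j := by positivity
    positivity
  set w : ℕ → ℕ → ℝ := fun k j => (1 + m/x)^(k+1) * a j with hw
  set K : ℕ → ℕ := fun n => (n+1)/2 with hK
  set R : ℕ → Ω → ℝ := fun n ω => ∏ i ∈ Finset.range (n+1), (1 + m / (x + S i ω)) with hR
  set g : ℕ → Ω → ℝ := fun n ω => ∑ k ∈ Finset.range (K n), ∑ j ∈ Finset.range (K n),
    Set.indicator (B k ∩ D k j) (fun _ => w k j) ω with hg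
  -- pointwise bound
  have h2K : ∀ n, 2 * K n ≤ n + 1 := by
    intro n
    have h : 2 * ((n+1)/2) ≤ n+1 := by omega
    exact h
  have hpt : ∀ n, ∀ᵐ ω ∂ℙ, g n ω ≤ R n ω := by
    intro n
    filter_upwards [ae_all_iff.mpr hnonneg] with ω hω
    have hSnn : ∀ i, 0 ≤ S i ω := fun i => by
      rw [hS]; exact Finset.sum_nonneg fun l _ => hω l
    have hxS : ∀ i, (0:ℝ) < x + S i ω := fun i => by linarith [hSnn i]
    have hfac1 : ∀ i, (1:ℝ) ≤ 1 + m / (x + S i ω) := by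
      intro i
      have h1 : 0 ≤ m / (x + S i ω) := div_nonneg hmpos.le (hxS i).le
      linarith
    have hfac0 : ∀ i, (0:ℝ) ≤ 1 + m / (x + S i ω) := fun i => zero_le_one.trans (hfac1 i)
    have hBinfo : ∀ k', ω ∈ B k' → (∀ l, l < k' → X l ω = 0) ∧ X k' ω ∈ Set.Ioc 0 (C:ℝ) := by
      intro k' hω'
      simp only [hB, Set.mem_iInter] at hω'
      constructor
      · intro l hl
        have h' := hω' l (Finset.mem_range.mpr (by omega))
        have hsl : sets k' l = {0} := by
          rw [hsets]; simp [Nat.ne_of_lt hl]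
        rw [hsl] at h'
        exact h'
      · have h' := hω' k' (Finset.mem_range.mpr (by omega))
        have hsl : sets k' k' = Set.Ioc 0 (C:ℝ) := by
          rw [hsets]; simp
        rwa [hsl] at h'
    by_cases hex : ∃ k, k ∈ Finset.range (K n) ∧ ω ∈ B k
    · obtain ⟨k, hkK, hωB⟩ := hex
      have hkK' : k < K n := Finset.mem_range.mp hkK
      obtain ⟨hXzero, hXk⟩ := hBinfo k hωB
      have hSzero : ∀ i, i ≤ k → S i ω = 0 := by
        intro i hi
        rw [hS]
        exact Finset.sum_eq_zero fun l hl =>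
          hXzero l (lt_of_lt_of_le (Finset.mem_range.mp hl) hi)
      have hDj : ∀ j, Set.indicator (D k j) (fun _ => a j) ω ≤ m / (x + S (k+1+j) ω) := by
        intro j
        by_cases hωD : ω ∈ D k j
        · rw [Set.indicator_of_mem hωD]
          have hsum : S (k+1+j) ω
              = (∑ l ∈ Finset.range (k+1), X l ω) + ∑ l ∈ Finset.Ico (k+1) (k+1+j), X l ω := by
            rw [hS, Finset.range_eq_Ico, Finset.range_eq_Ico]
            exact (Finset.sum_Ico_consecutive (fun l => X l ω) (show 0 ≤ k+1 by omega) (show k+1 ≤ k+1+j by omega)).symm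
          have h1 : ∑ l ∈ Finset.range (k+1), X l ω = X k ω := by
            rw [Finset.sum_range_succ,
              Finset.sum_eq_zero (fun l hl => hXzero l (Finset.mem_range.mp hl)), zero_add]
          have h2 : ∑ l ∈ Finset.Ico (k+1) (k+1+j), X l ω ≤ 2*m*j := by
            simpa only [hD, Set.mem_setOf_eq] using hωD
          have hSle : S (k+1+j) ω ≤ C + 2*m*j := by
            rw [hsum, h1]
            have := hXk.2
            linarith
          rw [ha]
          exact div_le_div_of_nonneg_left hmpos.le (hxS (k+1+j)) (by linarith)
        · rw [Set.indicator_of_notMem hωD]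
          exact div_nonneg hmpos.le (hxS (k+1+j)).le
      have hrow : g n ω
          = ∑ j ∈ Finset.range (K n), Set.indicator (B k ∩ D k j) (fun _ => w k j) ω := by
        rw [hg]
        refine Finset.sum_eq_single_of_mem k hkK (fun k' hk' hne => ?_)
        refine Finset.sum_eq_zero fun j _ => ?_
        refine Set.indicator_of_notMem ?_ _
        intro hmem
        obtain ⟨hz', hk'mem⟩ := hBinfo k' hmem.1
        rcases lt_or_gt_of_ne hne with h|h
        · have h0 := hXzero k' h
          have := hk'mem.1
          linarith
        · have h0 := hz' k h
          have := hXk.1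
          linarith
      have hindid : ∀ j, Set.indicator (B k ∩ D k j) (fun _ => w k j) ω
          = Set.indicator (D k j) (fun _ => w k j) ω := by
        intro j
        by_cases hωD : ω ∈ D k j
        · rw [Set.indicator_of_mem hωD, Set.indicator_of_mem (Set.mem_inter hωB hωD)]
        · rw [Set.indicator_of_notMem hωD,
            Set.indicator_of_notMem (fun hmem => hωD hmem.2)]
      have hpow0 : (0:ℝ) ≤ (1 + m/x)^(k+1) := pow_nonneg (by linarith) _
      calc g n ω = ∑ j ∈ Finset.range (K n), Set.indicator (D k j) (fun _ => w k j) ω := by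
            rw [hrow]
            exact Finset.sum_congr rfl fun j _ => hindid j
        _ = (1+m/x)^(k+1)
            * ∑ j ∈ Finset.range (K n), Set.indicator (D k j) (fun _ => a j) ω := by
            rw [Finset.mul_sum]
            refine Finset.sum_congr rfl fun j _ => ?_
            by_cases hωD : ω ∈ D k j
            · rw [Set.indicator_of_mem hωD, Set.indicator_of_mem hωD, hw]
            · rw [Set.indicator_of_notMem hωD, Set.indicator_of_notMem hωD, mul_zero]
        _ ≤ (1+m/x)^(k+1) * ∑ j ∈ Finset.range (K n), m / (x + S (k+1+j) ω) :=
            mul_le_mul_of_nonneg_left (Finset.sum_le_sum fun j _ => hDj j) hpow0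
        _ ≤ (1+m/x)^(k+1) * ∏ j ∈ Finset.range (K n), (1 + m / (x + S (k+1+j) ω)) :=
            mul_le_mul_of_nonneg_left
              (aux_sum_le_prod (K n) _ fun j => div_nonneg hmpos.le (hxS (k+1+j)).le) hpow0
        _ = (∏ i ∈ Finset.range (k+1), (1 + m/(x + S i ω)))
            * ∏ j ∈ Finset.range (K n), (1 + m/(x + S (k+1+j) ω)) := by
            congr 1
            have hc : ∀ i ∈ Finset.range (k+1), (1 + m/(x + S i ω)) = 1 + m/x := by
              intro i hi
              have hik := Finset.mem_range.mp hi
              rw [hSzero i (by omega), add_zero]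
            rw [Finset.prod_congr rfl hc, Finset.prod_const, Finset.card_range]
        _ = ∏ i ∈ Finset.range (k+1 + K n), (1 + m/(x + S i ω)) :=
            (Finset.prod_range_add _ (k+1) (K n)).symm
        _ ≤ R n ω := by
            rw [hR]
            have hsplit : n+1 = (k+1+K n) + (n+1 - (k+1+K n)) := by
              have := h2K n
              omega
            have hone : (1:ℝ) ≤ ∏ i ∈ Finset.range (n+1 - (k+1+K n)),
                (1 + m/(x + S (k+1+K n + i) ω)) := by
              calc (1:ℝ) = ∏ i ∈ Finset.range (n+1 - (k+1+K n)), 1 := by simp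
                _ ≤ _ := Finset.prod_le_prod (by simp) (fun i _ => hfac1 _)
            calc ∏ i ∈ Finset.range (k+1+K n), (1 + m/(x + S i ω))
                ≤ (∏ i ∈ Finset.range (k+1+K n), (1 + m/(x + S i ω)))
                  * ∏ i ∈ Finset.range (n+1 - (k+1+K n)),
                    (1 + m/(x + S (k+1+K n + i) ω)) :=
                  le_mul_of_one_le_right (Finset.prod_nonneg fun i _ => hfac0 i) hone
              _ = ∏ i ∈ Finset.range (n+1), (1 + m/(x + S i ω)) := by
                  have hpr := Finset.prod_range_add (fun i => 1 + m/(x + S i ω))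
                    (k+1+K n) (n+1-(k+1+K n))
                  rw [show (k+1+K n) + (n+1-(k+1+K n)) = n+1 from by omega] at hpr
                  exact hpr.symm
    · push_neg at hex
      have hg0 : g n ω = 0 := by
        rw [hg]
        refine Finset.sum_eq_zero fun k hk => Finset.sum_eq_zero fun j _ => ?_
        exact Set.indicator_of_notMem (fun hmem => hex k hk hmem.1) _
      rw [hg0, hR]
      exact Finset.prod_nonneg fun i _ => hfac0 i
  -- integrability
  have hSmeas : ∀ i, Measurable (S i) := by
    intro i
    have : S i = fun ω => ∑ j ∈ Finset.range i, X j ω := funext (hS i)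
    rw [this]
    exact Finset.measurable_sum _ fun j _ => hmeas j
  have hRint : ∀ n, Integrable (R n) ℙ := by
    intro n
    have hmeasR : Measurable (R n) := by
      refine Finset.measurable_prod _ fun i _ => ?_
      exact measurable_const.add (measurable_const.div (measurable_const.add (hSmeas i)))
    refine Integrable.mono' (integrable_const ((1+m/x)^(n+1))) hmeasR.aestronglyMeasurable ?_
    filter_upwards [ae_all_iff.mpr hnonneg] with ω hω
    have hSnn : ∀ i, 0 ≤ S i ω := fun i => by
      rw [hS]; exact Finset.sum_nonneg fun l _ => hω l
    have hfac_nn : ∀ i, (0:ℝ) ≤ 1 + m / (x + S i ω) := by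
      intro i
      have h0 : (0:ℝ) < x + S i ω := by linarith [hSnn i]
      positivity
    rw [Real.norm_eq_abs, abs_of_nonneg (Finset.prod_nonneg fun i _ => hfac_nn i)]
    calc ∏ i ∈ Finset.range (n+1), (1 + m / (x + S i ω))
        ≤ ∏ i ∈ Finset.range (n+1), (1 + m/x) := by
          refine Finset.prod_le_prod (fun i _ => hfac_nn i) fun i _ => ?_
          have h0 : (0:ℝ) < x + S i ω := by linarith [hSnn i]
          have : m / (x + S i ω) ≤ m / x :=
            div_le_div_of_nonneg_left hmpos.le hx (by linarith [hSnn i])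
          linarith
      _ = (1+m/x)^(n+1) := by rw [Finset.prod_const, Finset.card_range]
  have hgint : ∀ n, Integrable (g n) ℙ := by
    intro n
    refine integrable_finset_sum _ fun k _ => integrable_finset_sum _ fun j _ => ?_
    exact (integrable_const (w k j)).indicator ((hBmeas k).inter (hDmeas k j))
  -- integral lower bound
  have hmain : ∀ n, (K n : ℝ) * ((q/2) * ∑ j ∈ Finset.range (K n), a j)
      ≤ ∫ ω, R n ω ∂ℙ := by
    intro n
    have hle : ∫ ω, g n ω ∂ℙ ≤ ∫ ω, R n ω ∂ℙ :=
      integral_mono_ae (hgint n) (hRint n) (hpt n)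
    have hgeq : ∫ ω, g n ω ∂ℙ = ∑ k ∈ Finset.range (K n), ∑ j ∈ Finset.range (K n),
        (ℙ (B k ∩ D k j)).toReal * w k j := by
      rw [hg]
      simp only []
      rw [integral_finset_sum _ (fun k _ => integrable_finset_sum _ fun j _ =>
        (integrable_const (w k j)).indicator ((hBmeas k).inter (hDmeas k j)))]
      refine Finset.sum_congr rfl fun k _ => ?_
      rw [integral_finset_sum _ (fun j _ =>
        (integrable_const (w k j)).indicator ((hBmeas k).inter (hDmeas k j)))]
      refine Finset.sum_congr rfl fun j _ => ?_
      rw [integral_indicator_const _ ((hBmeas k).inter (hDmeas k j)), smul_eq_mul, measureReal_def]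
    have hterm : ∀ k, ∀ j, (q/2) * a j ≤ (ℙ (B k ∩ D k j)).toReal * w k j := by
      intro k j
      have e1 : (ℙ (B k ∩ D k j)).toReal * w k j
          = (q * (ℙ (D k j)).toReal * a j) * ((1+m/x)^(k+1) * r^k) := by
        rw [hPBD, ENNReal.toReal_mul, hPB, hw]
        ring
      have hk1 : (1:ℝ) ≤ (1+m/x)^(k+1) * r^k := by
        have h2 : (1+m/x)^(k+1) * r^k = ((1+m/x)*r)^k * (1+m/x) := by
          rw [mul_pow, pow_succ]; ring
        have h3 : (1:ℝ) ≤ ((1+m/x)*r)^k := one_le_pow₀ (by nlinarith [hrx])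
        rw [h2]
        nlinarith [h3, h1mx]
      have h4 : (q/2) * a j ≤ q * (ℙ (D k j)).toReal * a j := by
        have := hPD k j
        nlinarith [mul_pos hC (hapos j)]
      rw [e1]
      calc (q/2) * a j ≤ q * (ℙ (D k j)).toReal * a j := h4
        _ ≤ (q * (ℙ (D k j)).toReal * a j) * ((1+m/x)^(k+1) * r^k) := by
          refine le_mul_of_one_le_right ?_ hk1
          have := hPD k j
          nlinarith [mul_pos hC (hapos j)]
    calc (K n : ℝ) * ((q/2) * ∑ j ∈ Finset.range (K n), a j)
        = ∑ _k ∈ Finset.range (K n), ((q/2) * ∑ j ∈ Finset.range (K n), a j) := by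
          rw [Finset.sum_const, Finset.card_range, nsmul_eq_mul]
      _ = ∑ _k ∈ Finset.range (K n), ∑ j ∈ Finset.range (K n), (q/2) * a j := by
          refine Finset.sum_congr rfl fun k _ => ?_
          rw [Finset.mul_sum]
      _ ≤ ∑ k ∈ Finset.range (K n), ∑ j ∈ Finset.range (K n),
          (ℙ (B k ∩ D k j)).toReal * w k j := by
          refine Finset.sum_le_sum fun k _ => Finset.sum_le_sum fun j _ => hterm k j
      _ = ∫ ω, g n ω ∂ℙ := hgeq.symm
      _ ≤ ∫ ω, R n ω ∂ℙ := hle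
  -- tendsto
  have htend : Tendsto (fun n => (∫ ω, R n ω ∂ℙ) / n) atTop atTop := by
    have hh : Tendsto (fun J : ℕ => ∑ j ∈ Finset.range J, a j) atTop atTop := by
      have h0 : (0:ℝ) < x + C := by positivity
      exact aux_harmonic m hmpos (x + C) h0
    have hKt : Tendsto K atTop atTop := by
      rw [hK]
      refine Filter.tendsto_atTop_atTop.mpr fun b => ⟨2*b, fun n hn => ?_⟩
      omega
    have hcomp : Tendsto (fun n => (q/4) * ∑ j ∈ Finset.range (K n), a j) atTop atTop :=
      Filter.Tendsto.const_mul_atTop (by positivity) (hh.comp hKt)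
    refine tendsto_atTop_mono' atTop ?_ hcomp
    filter_upwards [eventually_ge_atTop 1] with n hn
    have h1 := hmain n
    have hn' : (0:ℝ) < n := by exact_mod_cast hn
    have hKn : (n:ℝ)/2 ≤ (K n : ℝ) := by
      have h2 : n ≤ 2 * K n := by
        have : n ≤ 2 * ((n+1)/2) := by omega
        exact this
      have h3 := (Nat.cast_le (α := ℝ)).mpr h2
      push_cast at h3
      linarith
    have hsum_nn : 0 ≤ ∑ j ∈ Finset.range (K n), a j :=
      Finset.sum_nonneg fun j _ => (hapos j).le
    rw [le_div_iff₀ hn']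
    calc (q/4) * (∑ j ∈ Finset.range (K n), a j) * n
        = ((n:ℝ)/2) * ((q/2) * ∑ j ∈ Finset.range (K n), a j) := by ring
      _ ≤ (K n : ℝ) * ((q/2) * ∑ j ∈ Finset.range (K n), a j) := by
          refine mul_le_mul_of_nonneg_right hKn ?_
          exact mul_nonneg (by linarith) hsum_nn
      _ ≤ ∫ ω, R n ω ∂ℙ := h1
  have : Tendsto (fun n => ENNReal.ofReal ((∫ ω, R n ω ∂ℙ) / n)) atTop (𝓝 ⊤) :=
    ENNReal.tendsto_ofReal_atTop.comp htend
  exact this.limsup_eq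
end

section
/- For the Bernoulli offspring distribution p = (1−λ)δ_0 + λδ_i with λ ∈ (0,1) and integer i ≥ 1, letting L have distribution p, the smallest c ≥ 0 such that E[s^L] ≤ (1 + E[L](1 − s^c))^{−1/c} for all s ∈ [0,1] is c = −log(1 + λi)/log(1 − λ). -/
open Real Set

private noncomputable def bF (i : ℕ) (l : ℝ) (s : ℝ) : ℝ := 1 - l + l * s ^ i

private noncomputable def bH (i : ℕ) (l c : ℝ) (s : ℝ) : ℝ :=
  bF i l s ^ (-c) + l * i * s ^ c

private noncomputable def bPsi (i : ℕ) (l c : ℝ) (s : ℝ) : ℝ :=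
  (c - i) * Real.log s + (c + 1) * Real.log (bF i l s)

private noncomputable def bChi (i : ℕ) (l c : ℝ) (s : ℝ) : ℝ :=
  (c - i) + (c + 1) * (l * i * s ^ i / bF i l s)

private lemma bF_pos (i : ℕ) {l : ℝ} (hl0 : 0 ≤ l) (hl1 : l < 1) {s : ℝ} (hs : 0 ≤ s) :
    0 < bF i l s := by
  have h : 0 ≤ l * s ^ i := mul_nonneg hl0 (pow_nonneg hs i)
  unfold bF; linarith

private lemma bF_hasDeriv (i : ℕ) (l : ℝ) (s : ℝ) :
    HasDerivAt (bF i l) (l * (i * s ^ (i - 1))) s := by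
  have h := ((hasDerivAt_pow i s).const_mul l).const_add (1 - l)
  exact h

private lemma bH_hasDeriv (i : ℕ) {l c : ℝ} (hl0 : 0 ≤ l) (hl1 : l < 1) {s : ℝ}
    (hs : 0 < s) :
    HasDerivAt (bH i l c)
      ((-c) * bF i l s ^ (-c - 1) * (l * (i * s ^ (i - 1))) + l * i * (c * s ^ (c - 1))) s := by
  have hFpos := bF_pos i hl0 hl1 hs.le
  have h1 := HasDerivAt.comp s
    (Real.hasDerivAt_rpow_const (x := bF i l s) (p := -c) (Or.inl hFpos.ne'))
    (bF_hasDeriv i l s)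
  have h2 : HasDerivAt (fun x : ℝ => l * i * x ^ c) (l * i * (c * s ^ (c - 1))) s :=
    (Real.hasDerivAt_rpow_const (x := s) (p := c) (Or.inl hs.ne')).const_mul (l * i)
  exact (h1.add h2 : _)

private lemma psi_one (i : ℕ) (l c : ℝ) : bPsi i l c 1 = 0 := by
  simp [bPsi, bF]

private lemma bH_zero (i : ℕ) (hi : 1 ≤ i) (l : ℝ) {c : ℝ} (hc : 0 < c) :
    bH i l c 0 = (1 - l) ^ (-c : ℝ) := by
  have : i ≠ 0 := by omega
  simp [bH, bF, zero_pow this, Real.zero_rpow hc.ne']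

private lemma bH_one (i : ℕ) (l c : ℝ) : bH i l c 1 = 1 + l * i := by
  simp [bH, bF]

private lemma bPsi_hasDeriv (i : ℕ) (hi : 1 ≤ i) {l c : ℝ} (hl0 : 0 ≤ l) (hl1 : l < 1)
    {s : ℝ} (hs : 0 < s) :
    HasDerivAt (bPsi i l c) (bChi i l c s / s) s := by
  have hF := bF_pos i hl0 hl1 hs.le
  have h1 : HasDerivAt (fun x : ℝ => (c - (i : ℝ)) * Real.log x) ((c - (i : ℝ)) * s⁻¹) s :=
    (Real.hasDerivAt_log hs.ne').const_mul _
  have h2 : HasDerivAt (fun x : ℝ => (c + 1) * Real.log (bF i l x))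
      ((c + 1) * ((bF i l s)⁻¹ * (l * (i * s ^ (i - 1))))) s :=
    (HasDerivAt.comp s (Real.hasDerivAt_log hF.ne') (bF_hasDeriv i l s)).const_mul _
  have h := h1.add h2
  have hpow : s ^ (i - 1) * s = s ^ i := by
    rw [← pow_succ]; congr 1; omega
  refine h.congr_deriv ?_
  unfold bChi
  rw [← hpow]
  field_simp

private lemma chi_mono (i : ℕ) {l c : ℝ} (hl0 : 0 ≤ l) (hl1 : l < 1) (hc : 0 < c)
    {s t : ℝ} (hs : 0 ≤ s) (hst : s ≤ t) : bChi i l c s ≤ bChi i l c t := by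
  have hFs := bF_pos i hl0 hl1 hs
  have hFt := bF_pos i hl0 hl1 (hs.trans hst)
  have hpow : s ^ i ≤ t ^ i := pow_le_pow_left₀ hs hst i
  have hin : (0:ℝ) ≤ l * i := mul_nonneg hl0 (Nat.cast_nonneg i)
  have key : l * i * s ^ i / bF i l s ≤ l * i * t ^ i / bF i l t := by
    rw [div_le_div_iff₀ hFs hFt]
    unfold bF
    nlinarith [mul_nonneg hin (mul_nonneg (sub_nonneg.2 hl1.le) (sub_nonneg.2 hpow))]
  unfold bChi
  have := mul_le_mul_of_nonneg_left key (by linarith : (0:ℝ) ≤ c + 1)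
  linarith

private lemma bPsi_contOn (i : ℕ) (hi : 1 ≤ i) {l c : ℝ} (hl0 : 0 ≤ l) (hl1 : l < 1)
    {u v : ℝ} (hu : 0 < u) : ContinuousOn (bPsi i l c) (Icc u v) := fun x hx =>
  ((bPsi_hasDeriv i hi hl0 hl1 (lt_of_lt_of_le hu hx.1)).continuousAt).continuousWithinAt

/-- If `χ v ≤ 0` and `0 < u ≤ v`, then `ψ v ≤ ψ u` (ψ is decreasing where χ ≤ 0). -/
private lemma psi_anti (i : ℕ) (hi : 1 ≤ i) {l c : ℝ} (hl0 : 0 ≤ l) (hl1 : l < 1)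
    (hc : 0 < c) {u v : ℝ} (hu : 0 < u) (huv : u ≤ v) (hχ : bChi i l c v ≤ 0) :
    bPsi i l c v ≤ bPsi i l c u := by
  have hA : AntitoneOn (bPsi i l c) (Icc u v) := by
    apply antitoneOn_of_deriv_nonpos (convex_Icc u v) (bPsi_contOn i hi hl0 hl1 hu)
    · intro x hx
      rw [interior_Icc] at hx
      exact (bPsi_hasDeriv i hi hl0 hl1 (hu.trans hx.1)).differentiableAt.differentiableWithinAt
    · intro x hx
      rw [interior_Icc] at hx
      have hx0 : 0 < x := hu.trans hx.1
      rw [(bPsi_hasDeriv i hi hl0 hl1 hx0).deriv]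
      have : bChi i l c x ≤ 0 := (chi_mono i hl0 hl1 hc hx0.le hx.2.le).trans hχ
      exact div_nonpos_iff.2 (Or.inr ⟨this, hx0.le⟩)
  exact hA ⟨le_rfl, huv⟩ ⟨huv, le_rfl⟩ huv

/-- If `0 < χ u` and `0 < u < v`, then `ψ u < ψ v` (ψ strictly increasing where χ > 0). -/
private lemma psi_mono (i : ℕ) (hi : 1 ≤ i) {l c : ℝ} (hl0 : 0 ≤ l) (hl1 : l < 1)
    (hc : 0 < c) {u v : ℝ} (hu : 0 < u) (huv : u < v) (hχ : 0 < bChi i l c u) :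
    bPsi i l c u < bPsi i l c v := by
  have hM : StrictMonoOn (bPsi i l c) (Icc u v) := by
    apply strictMonoOn_of_deriv_pos (convex_Icc u v) (bPsi_contOn i hi hl0 hl1 hu)
    intro x hx
    rw [interior_Icc] at hx
    have hx0 : 0 < x := hu.trans hx.1
    rw [(bPsi_hasDeriv i hi hl0 hl1 hx0).deriv]
    exact div_pos (lt_of_lt_of_le hχ (chi_mono i hl0 hl1 hc hu.le hx.1.le)) hx0
  exact hM ⟨le_rfl, huv.le⟩ ⟨huv.le, le_rfl⟩ huv

/-- Sign of the derivative of H is the sign of ψ. -/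
private lemma bH_deriv_sign (i : ℕ) (hi : 1 ≤ i) {l c : ℝ} (hl0 : 0 < l) (hl1 : l < 1)
    (hc : 0 < c) {s : ℝ} (hs0 : 0 < s) :
    (0 ≤ bPsi i l c s → 0 ≤ deriv (bH i l c) s) ∧
      (bPsi i l c s ≤ 0 → deriv (bH i l c) s ≤ 0) := by
  have hF := bF_pos i hl0.le hl1 hs0.le
  have hD := (bH_hasDeriv i (c := c) hl0.le hl1 hs0).deriv
  have hfac : deriv (bH i l c) s
      = l * i * c * (s ^ (c - 1) - s ^ (i - 1) * bF i l s ^ (-c - 1)) := by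
    rw [hD]; ring
  have hpos : 0 < l * i * c := by
    have : (0:ℝ) < i := by exact_mod_cast Nat.lt_of_lt_of_le Nat.zero_lt_one hi
    positivity
  have hexp1 : s ^ (c - 1) = Real.exp ((c - 1) * Real.log s) := by
    rw [Real.rpow_def_of_pos hs0, mul_comm]
  have hexp2 : s ^ (i - 1) * bF i l s ^ (-c - 1)
      = Real.exp ((((i:ℝ) - 1)) * Real.log s + (-c - 1) * Real.log (bF i l s)) := by
    rw [← Real.rpow_natCast s (i - 1), Real.rpow_def_of_pos hs0,
      Real.rpow_def_of_pos hF, ← Real.exp_add]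
    congr 1
    push_cast [Nat.cast_sub hi]
    ring
  constructor
  · intro hψ
    rw [hfac]
    apply mul_nonneg hpos.le
    rw [sub_nonneg, hexp1, hexp2]
    apply Real.exp_le_exp.2
    unfold bPsi at hψ
    linarith
  · intro hψ
    rw [hfac]
    apply mul_nonpos_of_nonneg_of_nonpos hpos.le
    rw [sub_nonpos, hexp1, hexp2]
    apply Real.exp_le_exp.2
    unfold bPsi at hψ
    linarith

private lemma bH_contOn (i : ℕ) {l c : ℝ} (hl0 : 0 ≤ l) (hl1 : l < 1) (hc : 0 < c)
    {u v : ℝ} (hu : 0 ≤ u) : ContinuousOn (bH i l c) (Icc u v) := by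
  apply ContinuousOn.add
  · apply ContinuousOn.rpow_const
    · exact (Continuous.continuousOn (by unfold bF; continuity))
    · intro x hx
      exact Or.inl (bF_pos i hl0 hl1 (hu.trans hx.1)).ne'
  · have h : ContinuousOn (fun x : ℝ => x ^ (c : ℝ)) (Icc u v) := fun x _ =>
      (Real.continuousAt_rpow_const x c (Or.inr hc.le)).continuousWithinAt
    exact continuousOn_const.mul h

/-- The key unimodality result: H(s) ≥ min (H 0) (H 1) on [0,1]. -/
private lemma bH_ge (i : ℕ) (hi : 1 ≤ i) {l c : ℝ} (hl0 : 0 < l) (hl1 : l < 1)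
    (hc : 0 < c) {s : ℝ} (hs : s ∈ Icc (0:ℝ) 1) :
    min (bH i l c 0) (bH i l c 1) ≤ bH i l c s := by
  obtain ⟨hs0, hs1⟩ := hs
  rcases eq_or_lt_of_le hs0 with h0 | h0
  · rw [← h0]; exact min_le_left _ _
  rcases eq_or_lt_of_le hs1 with h1 | h1
  · rw [h1]; exact min_le_right _ _
  by_cases hψ : 0 ≤ bPsi i l c s
  · -- χ s ≤ 0, else ψ would be strictly increasing up to 1 where ψ 1 = 0
    have hχs : bChi i l c s ≤ 0 := by
      by_contra h
      push_neg at h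
      have := psi_mono i hi hl0.le hl1 hc h0 h1 h
      rw [psi_one] at this
      linarith
    have hmono : MonotoneOn (bH i l c) (Icc 0 s) := by
      apply monotoneOn_of_deriv_nonneg (convex_Icc _ _) (bH_contOn i hl0.le hl1 hc le_rfl)
      · intro x hx
        rw [interior_Icc] at hx
        exact (bH_hasDeriv i hl0.le hl1 hx.1).differentiableAt.differentiableWithinAt
      · intro x hx
        rw [interior_Icc] at hx
        apply (bH_deriv_sign i hi hl0 hl1 hc hx.1).1
        have := psi_anti i hi hl0.le hl1 hc hx.1 hx.2.le hχs
        linarith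
    calc min (bH i l c 0) (bH i l c 1) ≤ bH i l c 0 := min_le_left _ _
      _ ≤ bH i l c s := hmono ⟨le_rfl, hs0⟩ ⟨hs0, le_rfl⟩ hs0
  · push_neg at hψ
    have hanti : AntitoneOn (bH i l c) (Icc s 1) := by
      apply antitoneOn_of_deriv_nonpos (convex_Icc _ _) (bH_contOn i hl0.le hl1 hc hs0)
      · intro x hx
        rw [interior_Icc] at hx
        exact (bH_hasDeriv i hl0.le hl1 (h0.trans hx.1)).differentiableAt.differentiableWithinAt
      · intro x hx
        rw [interior_Icc] at hx
        have hx0 : 0 < x := h0.trans hx.1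
        apply (bH_deriv_sign i hi hl0 hl1 hc hx0).2
        by_cases hχx : bChi i l c x ≤ 0
        · have := psi_anti i hi hl0.le hl1 hc h0 hx.1.le hχx
          linarith
        · push_neg at hχx
          have := psi_mono i hi hl0.le hl1 hc hx0 hx.2 hχx
          rw [psi_one] at this
          linarith
    calc min (bH i l c 0) (bH i l c 1) ≤ bH i l c 1 := min_le_right _ _
      _ ≤ bH i l c s := hanti ⟨le_rfl, hs1⟩ ⟨hs1, le_rfl⟩ hs1

/-- For the Bernoulli offspring distribution `p = (1−λ)δ₀ + λδ_i` with `λ ∈ (0,1)` and an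
integer `i ≥ 1` (so `E[L] = λi` and `E[s^L] = 1 − λ + λs^i`), the smallest `c > 0` such that
`1 − λ + λs^i ≤ (1 + λi(1 − s^c))^{−1/c}` for all `s ∈ [0,1]` is
`c = −log(1 + λi)/log(1 − λ)` (real powers `s^c` are `Real.rpow`). -/
theorem bernoulli_C_value
    (i : ℕ) (hi : 1 ≤ i) (l : ℝ) (hl : l ∈ Set.Ioo (0 : ℝ) 1) :
    sInf {c : ℝ | 0 < c ∧ ∀ s ∈ Set.Icc (0 : ℝ) 1,
        1 - l + l * s ^ i ≤ (1 + l * i * (1 - s ^ c)) ^ (-1 / c)} =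
      -Real.log (1 + l * i) / Real.log (1 - l) := by
  obtain ⟨hl0, hl1⟩ := hl
  have hi1 : (1:ℝ) ≤ (i:ℝ) := by exact_mod_cast hi
  have hMgt : 1 < 1 + l * i := by nlinarith
  have hMpos : (0:ℝ) < 1 + l * i := by linarith
  have ha0 : (0:ℝ) < 1 - l := by linarith
  have hla : Real.log (1 - l) < 0 := Real.log_neg ha0 (by linarith)
  have hlM : 0 < Real.log (1 + l * i) := Real.log_pos hMgt
  set c := -Real.log (1 + l * i) / Real.log (1 - l) with hcdef
  have hc : 0 < c := by
    have h : c = Real.log (1 + l * i) / (-(Real.log (1 - l))) := by rw [hcdef]; ring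
    rw [h]
    exact div_pos hlM (by linarith)
  have hac : (1 - l) ^ (-c : ℝ) = 1 + l * i := by
    rw [Real.rpow_def_of_pos ha0]
    have h : Real.log (1 - l) * -c = Real.log (1 + l * i) := by
      rw [hcdef]
      field_simp
      exact div_self hla.ne
    rw [h, Real.exp_log hMpos]
  -- membership of c in the set
  have hmem : c ∈ {c : ℝ | 0 < c ∧ ∀ s ∈ Set.Icc (0 : ℝ) 1,
      1 - l + l * s ^ i ≤ (1 + l * i * (1 - s ^ c)) ^ (-1 / c)} := by
    refine ⟨hc, fun s hs => ?_⟩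
    have hkey := bH_ge i hi hl0 hl1 hc hs
    rw [bH_zero i hi l hc, bH_one, hac, min_self] at hkey
    unfold bH at hkey
    have hsc1 : s ^ (c:ℝ) ≤ 1 := Real.rpow_le_one hs.1 hs.2 hc.le
    have hY : (1:ℝ) ≤ 1 + l * i * (1 - s ^ (c:ℝ)) := by nlinarith
    have hYF : 1 + l * i * (1 - s ^ (c:ℝ)) ≤ bF i l s ^ (-c : ℝ) := by linarith
    have hneg : -1 / c ≤ 0 := div_nonpos_iff.2 (Or.inr ⟨by norm_num, hc.le⟩)
    have h2 := Real.rpow_le_rpow_of_nonpos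
      (by linarith : (0:ℝ) < 1 + l * i * (1 - s ^ (c:ℝ))) hYF hneg
    have hFnn : 0 ≤ bF i l s := (bF_pos i hl0.le hl1 hs.1).le
    have h3 : (bF i l s ^ (-c : ℝ)) ^ (-1 / c : ℝ) = bF i l s := by
      rw [← Real.rpow_mul hFnn]
      have h4 : (-c) * (-1 / c) = 1 := by field_simp
      rw [h4, Real.rpow_one]
    rw [h3] at h2
    exact h2
  -- lower bound
  have hlb : ∀ c' ∈ {c : ℝ | 0 < c ∧ ∀ s ∈ Set.Icc (0 : ℝ) 1,
      1 - l + l * s ^ i ≤ (1 + l * i * (1 - s ^ c)) ^ (-1 / c)}, c ≤ c' := by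
    rintro c' ⟨hc', hall⟩
    have h0 := hall 0 ⟨le_rfl, zero_le_one⟩
    have hiz : i ≠ 0 := by omega
    rw [zero_pow hiz, Real.zero_rpow hc'.ne'] at h0
    have h0' : 1 - l ≤ (1 + l * i) ^ (-1 / c' : ℝ) := by
      have : 1 + l * ↑i * (1 - 0) = 1 + l * ↑i := by ring
      rw [this] at h0
      linarith
    have hlog := Real.log_le_log ha0 h0'
    rw [Real.log_rpow hMpos] at hlog
    rw [hcdef, div_le_iff_of_neg hla]
    have hmul := mul_le_mul_of_nonneg_left hlog hc'.le
    have heq : c' * (-1 / c' * Real.log (1 + l * i)) = -Real.log (1 + l * i) := by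
      field_simp
    rw [heq] at hmul
    linarith
  apply le_antisymm
  · exact csInf_le ⟨c, fun x hx => hlb x hx⟩ hmem
  · exact le_csInf ⟨c, hmem⟩ hlb
end
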